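/- arXiv:2303.12473 — 9 statements merged into one kernel-verified Lean document; each statement's English description precedes it below -/
import Mathlib

section
/- Let A be a real n×n matrix whose symmetric part H(A) = (A + Aᵀ)/2 is positive definite, with largest and smallest eigenvalues λ_max and λ_min. Set η* = (λ_max + λ_min)/2. Then ‖(η* I + S(A))⁻¹‖₂ · ‖H(A) − η* I‖₂ < 1, where S(A) = (A − Aᵀ)/2 is the skew-symmetric part of A and ‖·‖₂ denotes the spectral (operator 2-) norm. In particular, η* I + S(A) is invertible. -/
open Matrix RealInnerProductSpace

/-- Spectral (operator 2-) norm of a real matrix. -/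
noncomputable def spec {m n : ℕ} (M : Matrix (Fin m) (Fin n) ℝ) : ℝ :=
  ‖LinearMap.toContinuousLinearMap (Matrix.toEuclideanLin M)‖

lemma spec_nonneg {m n : ℕ} (M : Matrix (Fin m) (Fin n) ℝ) : 0 ≤ spec M :=
  norm_nonneg _

lemma spec_le {m n : ℕ} (M : Matrix (Fin m) (Fin n) ℝ) {c : ℝ} (hc : 0 ≤ c)
    (h : ∀ x : EuclideanSpace ℝ (Fin n), ‖Matrix.toEuclideanLin M x‖ ≤ c * ‖x‖) :
    spec M ≤ c :=
  ContinuousLinearMap.opNorm_le_bound _ hc (fun x => by simpa using h x)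

lemma parseval {n : ℕ} (b : OrthonormalBasis (Fin n) ℝ (EuclideanSpace ℝ (Fin n)))
    (y : EuclideanSpace ℝ (Fin n)) : ‖y‖ ^ 2 = ∑ i, ⟪b i, y⟫ ^ 2 := by
  rw [← b.repr.norm_map y, EuclideanSpace.norm_eq, Real.sq_sqrt (by positivity)]
  simp [b.repr_apply_apply, sq_abs]

lemma inner_toEuclideanLin {n : ℕ} (M : Matrix (Fin n) (Fin n) ℝ)
    (x : EuclideanSpace ℝ (Fin n)) :
    ⟪x, Matrix.toEuclideanLin M x⟫ = (x : Fin n → ℝ) ⬝ᵥ (M *ᵥ (x : Fin n → ℝ)) := by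
  simp [PiLp.inner_apply, toEuclideanLin_apply, dotProduct, Matrix.mulVec]
  exact Finset.sum_congr rfl fun _ _ => mul_comm _ _

/-- If the symmetric part `H` of a real `n × n` matrix `A` is positive definite, with largest
and smallest eigenvalues `λmax` and `λmin`, and `η* = (λmax + λmin)/2`, then
`‖(η* I + S(A))⁻¹‖₂ ⬝ ‖H(A) − η* I‖₂ < 1`; in particular `η* I + S(A)` is invertible. -/
theorem stmt0 {n : ℕ} (A H S : Matrix (Fin n) (Fin n) ℝ)
    (hHdef : H = (1 / 2 : ℝ) • (A + Aᵀ))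
    (hSdef : S = (1 / 2 : ℝ) • (A - Aᵀ))
    (hH : H.IsHermitian) (hpd : H.PosDef)
    (lmax lmin η : ℝ)
    (hlmax : lmax = ⨆ i, hH.eigenvalues i)
    (hlmin : lmin = ⨅ i, hH.eigenvalues i)
    (hη : η = (lmax + lmin) / 2) :
    IsUnit (η • (1 : Matrix (Fin n) (Fin n) ℝ) + S) ∧
      spec ((η • (1 : Matrix (Fin n) (Fin n) ℝ) + S)⁻¹) *
        spec (H - η • (1 : Matrix (Fin n) (Fin n) ℝ)) < 1 := by
  classical
  set M : Matrix (Fin n) (Fin n) ℝ := η • (1 : Matrix (Fin n) (Fin n) ℝ) + S with hMdef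
  set N : Matrix (Fin n) (Fin n) ℝ := H - η • (1 : Matrix (Fin n) (Fin n) ℝ) with hNdef
  rcases Nat.eq_zero_or_pos n with hn | hn
  · subst hn
    have hz : ∀ B : Matrix (Fin 0) (Fin 0) ℝ, spec B = 0 := by
      intro B
      have hB : (LinearMap.toContinuousLinearMap (Matrix.toEuclideanLin B)) = 0 :=
        ContinuousLinearMap.ext fun x => Subsingleton.elim _ _
      rw [spec, hB, norm_zero]
    refine ⟨isUnit_of_subsingleton _, ?_⟩
    rw [hz, hz]; norm_num
  haveI : Nonempty (Fin n) := ⟨⟨0, hn⟩⟩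
  -- eigenvalue facts
  have hbddA : BddAbove (Set.range hH.eigenvalues) := Set.Finite.bddAbove (Set.finite_range _)
  have hbddB : BddBelow (Set.range hH.eigenvalues) := Set.Finite.bddBelow (Set.finite_range _)
  have hminpos : 0 < lmin := by
    obtain ⟨j, hj⟩ := Finite.exists_min hH.eigenvalues
    exact lt_of_lt_of_le (hpd.eigenvalues_pos j) (hlmin ▸ le_ciInf hj)
  have hle1 : ∀ i, hH.eigenvalues i ≤ lmax := fun i => hlmax ▸ le_ciSup hbddA i
  have hle2 : ∀ i, lmin ≤ hH.eigenvalues i := fun i => hlmin ▸ ciInf_le hbddB i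
  have hlm : lmin ≤ lmax := le_trans (hle2 (Classical.arbitrary _)) (hle1 _)
  have hηpos : 0 < η := by rw [hη]; linarith
  set c : ℝ := (lmax - lmin) / 2 with hc
  have hc0 : 0 ≤ c := by rw [hc]; linarith
  have hcη : c < η := by rw [hc, hη]; linarith
  -- skew symmetry
  have hST : Sᵀ = -S := by
    rw [hSdef, Matrix.transpose_smul, Matrix.transpose_sub, Matrix.transpose_transpose,
      ← neg_sub, smul_neg]
  -- coercivity
  have hdot : ∀ v : Fin n → ℝ, v ⬝ᵥ (M *ᵥ v) = η * (v ⬝ᵥ v) := by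
    intro v
    have hS0 : v ⬝ᵥ (S *ᵥ v) = 0 := by
      have h2 : v ⬝ᵥ (S *ᵥ v) = -(v ⬝ᵥ (S *ᵥ v)) := by
        conv_lhs => rw [Matrix.dotProduct_mulVec, ← Matrix.mulVec_transpose, hST,
          Matrix.neg_mulVec, neg_dotProduct, dotProduct_comm]
      linarith
    rw [hMdef, Matrix.add_mulVec, Matrix.smul_mulVec, Matrix.one_mulVec,
      dotProduct_add, hS0, dotProduct_smul, smul_eq_mul, add_zero]
  -- invertibility
  have hMker : ∀ v : Fin n → ℝ, M *ᵥ v = 0 → v = 0 := by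
    intro v hv
    have h := hdot v
    rw [hv, dotProduct_zero] at h
    have hvv : v ⬝ᵥ v = 0 := (mul_eq_zero.mp h.symm).resolve_left (ne_of_gt hηpos)
    exact dotProduct_self_eq_zero.mp hvv
  have hinj : Function.Injective (M.mulVec) := by
    intro v w hvw
    have h0 : M *ᵥ (v - w) = 0 := by rw [Matrix.mulVec_sub, hvw, sub_self]
    exact sub_eq_zero.mp (hMker _ h0)
  have hunit : IsUnit M := Matrix.mulVec_injective_iff_isUnit.mp hinj
  have hMMinv : M * M⁻¹ = 1 := Matrix.mul_nonsing_inv M ((Matrix.isUnit_iff_isUnit_det M).mp hunit)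
  -- lower bound on ‖Mx‖
  have hlow : ∀ x : EuclideanSpace ℝ (Fin n), η * ‖x‖ ≤ ‖Matrix.toEuclideanLin M x‖ := by
    intro x
    rcases eq_or_ne x 0 with rfl | hx
    · simp
    have h1 : ⟪x, Matrix.toEuclideanLin M x⟫ = η * ‖x‖ ^ 2 := by
      rw [inner_toEuclideanLin, hdot]
      congr 1
      have : (x : Fin n → ℝ) ⬝ᵥ (x : Fin n → ℝ) = ⟪x, x⟫ := by
        simp [PiLp.inner_apply, dotProduct]
        rw [EuclideanSpace.norm_eq, Real.sq_sqrt (by positivity)]; simp [sq]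
      rw [this, real_inner_self_eq_norm_sq]
    have h2 : η * ‖x‖ ^ 2 ≤ ‖x‖ * ‖Matrix.toEuclideanLin M x‖ := h1 ▸ real_inner_le_norm x _
    have hxn : 0 < ‖x‖ := norm_pos_iff.mpr hx
    nlinarith [h2, hxn]
  -- spec bound for M⁻¹
  have hMinv : spec M⁻¹ ≤ 1 / η := by
    apply spec_le _ (by positivity)
    intro y
    set x := Matrix.toEuclideanLin M⁻¹ y with hxdef
    have hxy : Matrix.toEuclideanLin M x = y := by
      have h3 : Matrix.toEuclideanLin M (Matrix.toEuclideanLin M⁻¹ y) =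
          Matrix.toEuclideanLin (M * M⁻¹) y := by
        simp [toEuclideanLin_apply, Matrix.mulVec_mulVec]
      rw [hxdef, h3, hMMinv]
      ext j
      simp [toEuclideanLin_apply, Matrix.one_mulVec]
    have h4 := hlow x
    rw [hxy] at h4
    have h5 := mul_le_mul_of_nonneg_left h4 (le_of_lt (by positivity : (0:ℝ) < 1 / η))
    rw [← mul_assoc, one_div, inv_mul_cancel₀ (ne_of_gt hηpos), one_mul] at h5
    rwa [one_div]
  -- spec bound for N
  have hNherm : N.IsHermitian := by
    show Nᴴ = N
    rw [hNdef, Matrix.conjTranspose_sub, hH.eq, Matrix.conjTranspose_smul,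
      Matrix.conjTranspose_one, star_trivial]
  have hNsym : (Matrix.toEuclideanLin N).IsSymmetric :=
    (Matrix.isHermitian_iff_isSymmetric).mp hNherm
  set b := hH.eigenvectorBasis with hb
  have hNb : ∀ i, Matrix.toEuclideanLin N (b i) =
      (hH.eigenvalues i - η) • (b i) := by
    intro i
    have hmv : N *ᵥ ⇑(b i) = (hH.eigenvalues i - η) • ⇑(b i) := by
      rw [hNdef, Matrix.sub_mulVec, hH.mulVec_eigenvectorBasis, Matrix.smul_mulVec,
        Matrix.one_mulVec, sub_smul]
    ext j
    have := congrFun hmv j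
    simpa [toEuclideanLin_apply] using this
  have hterm : ∀ (x : EuclideanSpace ℝ (Fin n)) i,
      ⟪b i, Matrix.toEuclideanLin N x⟫ = (hH.eigenvalues i - η) * ⟪b i, x⟫ := by
    intro x i
    rw [← hNsym (b i) x, hNb i, real_inner_smul_left]
  have hspecN : spec N ≤ c := by
    apply spec_le _ hc0
    intro x
    have hsq : ‖Matrix.toEuclideanLin N x‖ ^ 2 ≤ (c * ‖x‖) ^ 2 := by
      rw [parseval b]
      rw [mul_pow, parseval b x, Finset.mul_sum]
      apply Finset.sum_le_sum
      intro i _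
      rw [hterm x i, mul_pow]
      have hev1 : hH.eigenvalues i - η ≤ c := by
        have := hle1 i; rw [hc, hη]; linarith
      have hev2 : -c ≤ hH.eigenvalues i - η := by
        have := hle2 i; rw [hc, hη]; linarith
      have h6 : (hH.eigenvalues i - η) ^ 2 ≤ c ^ 2 := sq_le_sq' hev2 hev1
      exact mul_le_mul_of_nonneg_right h6 (sq_nonneg _)
    have h7 : (0:ℝ) ≤ c * ‖x‖ := by positivity
    nlinarith [norm_nonneg (Matrix.toEuclideanLin N x), hsq, h7]
  refine ⟨hunit, ?_⟩
  calc spec M⁻¹ * spec N ≤ (1 / η) * c :=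
        mul_le_mul hMinv hspecN (spec_nonneg _) (by positivity)
    _ < 1 := by rw [one_div_mul_eq_div, div_lt_one hηpos]; exact hcη
end

section
/- Let A be an invertible real n×n matrix, b ∈ ℝⁿ, and M̃ an invertible real n×n matrix. Let x_k, x_{k−1} ∈ ℝⁿ with residuals r_k = b − A x_k and r_{k−1} = b − A x_{k−1}, and set δ₁ = M̃⁻¹ r_k and δ₂ = δ₁ − M̃⁻¹ r_{k−1}. If δ₁ and δ₂ are nonzero and linearly dependent, then there exists a scalar ν ∈ ℝ such that x* = (1 − ν) x_k + ν x_{k−1} satisfies A x* = b. -/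
open Matrix

/-- If `δ₁ = M̃⁻¹ r_k` and `δ₂ = δ₁ − M̃⁻¹ r_{k−1}` are nonzero and linearly dependent, then
some affine combination `x* = (1 − ν) x_k + ν x_{k−1}` solves `A x = b` exactly. -/
theorem stmt1 {n : ℕ} (A M : Matrix (Fin n) (Fin n) ℝ)
    (hA : IsUnit A) (hM : IsUnit M)
    (b xk xk1 rk rk1 δ1 δ2 : Fin n → ℝ)
    (hrk : rk = b - A.mulVec xk)
    (hrk1 : rk1 = b - A.mulVec xk1)
    (hδ1 : δ1 = M⁻¹.mulVec rk)
    (hδ2 : δ2 = δ1 - M⁻¹.mulVec rk1)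
    (h1 : δ1 ≠ 0) (h2 : δ2 ≠ 0)
    (hdep : ¬ LinearIndependent ℝ ![δ1, δ2]) :
    ∃ ν : ℝ, A.mulVec ((1 - ν) • xk + ν • xk1) = b := by
  -- extract dependence: δ1 = a • δ2
  rw [linearIndependent_fin2] at hdep
  push_neg at hdep
  obtain ⟨a, ha⟩ := hdep h2
  simp only [Matrix.cons_val_one, Matrix.cons_val_zero, Matrix.head_cons] at ha
  -- δ1 = a • δ2, i.e. M⁻¹ rk = a • (M⁻¹ rk - M⁻¹ rk1)
  have hMdet : IsUnit M.det := (Matrix.isUnit_iff_isUnit_det M).mp hM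
  have hkey : rk = a • rk - a • rk1 := by
    have h : M.mulVec δ1 = M.mulVec (a • δ2) := by rw [← ha]
    have hcancel : ∀ v : Fin n → ℝ, M.mulVec (M⁻¹.mulVec v) = v := by
      intro v
      rw [Matrix.mulVec_mulVec, Matrix.mul_nonsing_inv M hMdet, Matrix.one_mulVec]
    rw [hδ1, hδ2, hδ1] at h
    simpa [Matrix.mulVec_smul, Matrix.mulVec_sub, hcancel, smul_sub] using h
  refine ⟨a, ?_⟩
  have hAxk : A.mulVec xk = b - rk := by rw [hrk]; abel
  have hAxk1 : A.mulVec xk1 = b - rk1 := by rw [hrk1]; abel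
  have : ((1 : ℝ) - a) • rk + a • rk1 = 0 := by
    rw [sub_smul, one_smul]
    nth_rewrite 1 [hkey]; abel
  rw [Matrix.mulVec_add, Matrix.mulVec_smul, Matrix.mulVec_smul, hAxk, hAxk1,
    smul_sub, smul_sub]
  have h' : ((1 : ℝ) - a) • b + a • b = b := by
    rw [sub_smul, one_smul]; abel
  calc ((1 - a) • b - (1 - a) • rk) + (a • b - a • rk1)
      = (((1 : ℝ) - a) • b + a • b) - (((1 : ℝ) - a) • rk + a • rk1) := by abel
    _ = b := by rw [this, h']; abel
end

section
/- Let A and M̃ be real n×n matrices with A and M̃ invertible. Define ξ̃ = inf over all nonzero y ∈ ℝⁿ of |⟨A M̃⁻¹ y, y⟩| / ⟨y, y⟩. Let r, r_prev ∈ ℝⁿ with r ≠ 0, set δ₁ = M̃⁻¹ r and δ₂ = M̃⁻¹ (r − r_prev), and suppose A δ₁ and A δ₂ are linearly independent. With v = (⟨r, A δ₁⟩, ⟨r, A δ₂⟩)ᵀ, (β₁, β₂)ᵀ = W_A(δ₁, δ₂)⁻¹ v and r' = r − β₁ A δ₁ − β₂ A δ₂, the inequality ‖r'‖² ≤ ‖r‖²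 · ( 1 − (ξ̃² / ‖A M̃⁻¹‖₂²) · ‖r‖² / (‖r‖² + ‖r − r_prev‖²) ) holds. -/
open Matrix
open scoped RealInnerProductSpace

/-- Action of a real matrix on Euclidean space. -/
noncomputable def mulE {m n : ℕ} (M : Matrix (Fin m) (Fin n) ℝ)
    (x : EuclideanSpace ℝ (Fin n)) : EuclideanSpace ℝ (Fin m) :=
  Matrix.toEuclideanLin M x

/-- The 2×2 Gram matrix `W_A(x, y)`. -/
noncomputable def gram {n : ℕ} (A : Matrix (Fin n) (Fin n) ℝ)
    (x y : EuclideanSpace ℝ (Fin n)) : Matrix (Fin 2) (Fin 2) ℝ :=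
  !![⟪mulE A x, mulE A x⟫, ⟪mulE A y, mulE A x⟫;
     ⟪mulE A x, mulE A y⟫, ⟪mulE A y, mulE A y⟫]

lemma mulE_mul {n : ℕ} (A B : Matrix (Fin n) (Fin n) ℝ) (x : EuclideanSpace ℝ (Fin n)) :
    mulE (A * B) x = mulE A (mulE B x) := by
  simp [mulE, Matrix.toEuclideanLin_apply, Matrix.mulVec_mulVec]

set_option synthInstance.maxHeartbeats 1000000 in
lemma norm_mulE_le {n : ℕ} (A : Matrix (Fin n) (Fin n) ℝ) (x : EuclideanSpace ℝ (Fin n)) :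
    ‖mulE A x‖ ≤ spec A * ‖x‖ := by
  simpa [mulE, spec] using
    (LinearMap.toContinuousLinearMap (Matrix.toEuclideanLin A)).le_opNorm x

set_option maxHeartbeats 1000000 in
/-- One-step residual reduction estimate for the two-dimensional minimum residual update:
`‖r'‖² ≤ ‖r‖² (1 − (ξ̃²/‖A M̃⁻¹‖₂²) · ‖r‖²/(‖r‖² + ‖r − r_prev‖²))`, where
`ξ̃ = inf_{y ≠ 0} |⟨A M̃⁻¹ y, y⟩|/⟨y, y⟩`. -/
theorem stmt5 {n : ℕ} (A M : Matrix (Fin n) (Fin n) ℝ)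
    (hA : IsUnit A) (hM : IsUnit M)
    (ξ : ℝ)
    (hξ : ξ = ⨅ y : {y : EuclideanSpace ℝ (Fin n) // y ≠ 0},
      |⟪mulE (A * M⁻¹) y.1, y.1⟫| / ⟪y.1, y.1⟫)
    (r rp : EuclideanSpace ℝ (Fin n)) (hr : r ≠ 0)
    (δ1 δ2 : EuclideanSpace ℝ (Fin n))
    (hδ1 : δ1 = mulE M⁻¹ r)
    (hδ2 : δ2 = mulE M⁻¹ (r - rp))
    (hind : LinearIndependent ℝ ![mulE A δ1, mulE A δ2])
    (v : Fin 2 → ℝ) (hv : v = ![⟪r, mulE A δ1⟫, ⟪r, mulE A δ2⟫])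
    (β : Fin 2 → ℝ) (hβ : β = (gram A δ1 δ2)⁻¹.mulVec v)
    (r' : EuclideanSpace ℝ (Fin n))
    (hr' : r' = r - β 0 • mulE A δ1 - β 1 • mulE A δ2) :
    ‖r'‖ ^ 2 ≤ ‖r‖ ^ 2 *
      (1 - ξ ^ 2 / spec (A * M⁻¹) ^ 2 * (‖r‖ ^ 2 / (‖r‖ ^ 2 + ‖r - rp‖ ^ 2))) := by
  set a := mulE A δ1 with ha
  set b := mulE A δ2 with hb
  have hpair := LinearIndependent.pair_iff.mp hind
  have hane : a ≠ 0 := by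
    intro h
    have := (hpair 1 0 (by simp [← ha, h])).1
    norm_num at this
  have hbne : b ≠ 0 := by
    intro h
    have := (hpair 0 1 (by simp [← hb, h])).2
    norm_num at this
  have hna : (0:ℝ) < ‖a‖ := norm_pos_iff.mpr hane
  have hnb : (0:ℝ) < ‖b‖ := norm_pos_iff.mpr hbne
  -- strict Cauchy-Schwarz
  have hcs1 : ⟪a, b⟫ < ‖a‖ * ‖b‖ := by
    rw [inner_lt_norm_mul_iff_real]
    intro h
    have := (hpair ‖b‖ (-‖a‖) (by rw [neg_smul, ← h]; abel)).1
    exact hnb.ne' this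
  have hcs2 : -⟪a, b⟫ < ‖a‖ * ‖b‖ := by
    have : (inner ℝ (-a) b : ℝ) < ‖-a‖ * ‖b‖ := by
      rw [inner_lt_norm_mul_iff_real]
      intro h
      have : (-‖b‖) • a + (-‖a‖) • b = 0 := by
        rw [neg_smul, neg_smul]
        have hh : -(‖b‖ • a) = ‖a‖ • b := by
          rw [← smul_neg, h]; simp
        rw [hh]; abel
      have := (hpair _ _ this).1
      simpa using hnb.ne' (neg_eq_zero.mp this)
    simpa [inner_neg_left] using this
  have hcs : ⟪a,b⟫^2 < ‖a‖^2 * ‖b‖^2 := by nlinarith [abs_nonneg ⟪a,b⟫]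
  -- Gram matrix determinant
  have hdet : (gram A δ1 δ2).det = ‖a‖^2 * ‖b‖^2 - ⟪a,b⟫^2 := by
    simp only [_root_.gram, Matrix.det_fin_two_of, ← ha, ← hb, real_inner_self_eq_norm_sq,
      real_inner_comm b a]
    ring
  have hdetpos : 0 < (gram A δ1 δ2).det := by rw [hdet]; linarith
  have hGβ : (gram A δ1 δ2).mulVec β = v := by
    rw [hβ, Matrix.mulVec_mulVec, Matrix.mul_nonsing_inv _ (isUnit_iff_ne_zero.mpr hdetpos.ne'),
      Matrix.one_mulVec]
  -- orthogonality of r'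
  have hG00 : gram A δ1 δ2 0 0 = ⟪a,a⟫ := by simp [_root_.gram, ha]
  have hG01 : gram A δ1 δ2 0 1 = ⟪b,a⟫ := by simp [_root_.gram, ha, hb]
  have hG10 : gram A δ1 δ2 1 0 = ⟪a,b⟫ := by simp [_root_.gram, ha, hb]
  have hG11 : gram A δ1 δ2 1 1 = ⟪b,b⟫ := by simp [_root_.gram, hb]
  have heq0 : ⟪a,a⟫ * β 0 + ⟪b,a⟫ * β 1 = ⟪r, a⟫ := by
    have := congrFun hGβ 0
    simpa [Matrix.mulVec, dotProduct, Fin.sum_univ_two, hG00, hG01, hv, ha] using this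
  have heq1 : ⟪a,b⟫ * β 0 + ⟪b,b⟫ * β 1 = ⟪r, b⟫ := by
    have := congrFun hGβ 1
    simpa [Matrix.mulVec, dotProduct, Fin.sum_univ_two, hG10, hG11, hv, hb] using this
  have horth_a : ⟪r', a⟫ = 0 := by
    rw [hr']
    simp only [inner_sub_left, real_inner_smul_left]
    linarith [heq0]
  have horth_b : ⟪r', b⟫ = 0 := by
    rw [hr']
    simp only [inner_sub_left, real_inner_smul_left]
    linarith [heq1]
  -- r' is orthogonal to any combination of a and b, so minimizes over the affine set
  have hkey : ∀ t : ℝ, ‖r'‖^2 ≤ ‖r - t • a‖^2 := by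
    intro t
    have hdecomp : r - t • a = r' + ((β 0 - t) • a + β 1 • b) := by
      rw [hr']
      module
    have hperp : ⟪r', (β 0 - t) • a + β 1 • b⟫ = 0 := by
      rw [inner_add_right, real_inner_smul_right, real_inner_smul_right, horth_a, horth_b]
      ring
    rw [hdecomp, norm_add_sq_real, hperp]
    nlinarith [sq_nonneg ‖(β 0 - t) • a + β 1 • b‖]
  -- choose the optimal t
  have hmain : ‖r'‖^2 ≤ ‖r‖^2 - ⟪r,a⟫^2 / ‖a‖^2 := by
    have := hkey (⟪r,a⟫ / ‖a‖^2)
    rw [norm_sub_sq_real, real_inner_smul_right, norm_smul] at this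
    have h2 : ‖⟪r,a⟫ / ‖a‖^2‖^2 * ‖a‖^2 = ⟪r,a⟫^2 / ‖a‖^2 := by
      rw [Real.norm_eq_abs, sq_abs, div_pow]
      field_simp
    calc ‖r'‖^2 ≤ ‖r‖^2 - 2 * (⟪r,a⟫/‖a‖^2 * ⟪r,a⟫) + ‖⟪r,a⟫/‖a‖^2‖^2 * ‖a‖^2 := by
            rw [mul_pow] at this; linarith
      _ = ‖r‖^2 - ⟪r,a⟫^2 / ‖a‖^2 := by rw [h2]; ring
  -- bounds on ξ and spec
  have hnr : (0:ℝ) < ‖r‖ := norm_pos_iff.mpr hr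
  have haAM : a = mulE (A * M⁻¹) r := by rw [ha, hδ1, mulE_mul]
  have hξ0 : 0 ≤ ξ := by
    rw [hξ]
    apply Real.iInf_nonneg
    intro y
    exact div_nonneg (abs_nonneg _) real_inner_self_nonneg
  have hξle : ξ ≤ |⟪r, a⟫| / ‖r‖^2 := by
    rw [hξ]
    have hbdd : BddBelow (Set.range fun y : {y : EuclideanSpace ℝ (Fin n) // y ≠ 0} =>
        |⟪mulE (A * M⁻¹) y.1, y.1⟫| / ⟪y.1, y.1⟫) := by
      refine ⟨0, ?_⟩
      rintro x ⟨y, rfl⟩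
      exact div_nonneg (abs_nonneg _) real_inner_self_nonneg
    have h := ciInf_le hbdd (⟨r, hr⟩ : {y : EuclideanSpace ℝ (Fin n) // y ≠ 0})
    have e : |⟪mulE (A * M⁻¹) r, r⟫| / ⟪r, r⟫ = |⟪r, a⟫| / ‖r‖^2 := by
      rw [← haAM, real_inner_self_eq_norm_sq, real_inner_comm]
    exact h.trans_eq e
  -- spec bound
  have hspec : ‖a‖ ≤ spec (A * M⁻¹) * ‖r‖ := by rw [haAM]; exact norm_mulE_le _ _
  have hspecpos : 0 < spec (A * M⁻¹) := by
    by_contra h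
    push_neg at h
    nlinarith
  -- combine: ⟪r,a⟫²/‖a‖² ≥ ξ²/spec² * ‖r‖²
  have hnum : ξ * ‖r‖^2 ≤ |⟪r,a⟫| := by
    rw [le_div_iff₀ (by positivity)] at hξle
    linarith [hξle]
  have hnum2 : ξ^2 * ‖r‖^4 ≤ ⟪r,a⟫^2 := by
    calc ξ^2 * ‖r‖^4 = (ξ * ‖r‖^2)^2 := by ring
      _ ≤ |⟪r,a⟫|^2 := by nlinarith [hnum, mul_nonneg hξ0 (sq_nonneg ‖r‖)]
      _ = ⟪r,a⟫^2 := sq_abs _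
  have hfrac : ξ^2 / spec (A*M⁻¹)^2 * ‖r‖^2 ≤ ⟪r,a⟫^2 / ‖a‖^2 := by
    rw [div_mul_eq_mul_div, div_le_div_iff₀ (by positivity) (by positivity)]
    calc ξ^2 * ‖r‖^2 * ‖a‖^2 ≤ ξ^2 * ‖r‖^2 * (spec (A*M⁻¹) * ‖r‖)^2 :=
          mul_le_mul_of_nonneg_left (pow_le_pow_left₀ (norm_nonneg a) hspec 2)
            (by positivity)
      _ = ξ^2 * ‖r‖^4 * spec (A*M⁻¹)^2 := by ring
      _ ≤ ⟪r,a⟫^2 * spec (A*M⁻¹)^2 := mul_le_mul_of_nonneg_right hnum2 (sq_nonneg _)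
  -- final inequality
  have hstrong : ‖r'‖^2 ≤ ‖r‖^2 - ξ^2 / spec (A*M⁻¹)^2 * ‖r‖^2 := by linarith
  have hfrac2 : ‖r‖^2 / (‖r‖^2 + ‖r - rp‖^2) ≤ 1 := by
    rw [div_le_one (by positivity)]
    nlinarith [sq_nonneg ‖r - rp‖]
  set c := ξ^2 / spec (A*M⁻¹)^2 with hcdef
  set t := ‖r‖^2 / (‖r‖^2 + ‖r - rp‖^2) with htdef
  have hc : 0 ≤ c := by positivity
  have hle : c * t * ‖r‖^2 ≤ c * ‖r‖^2 := by
    calc c * t * ‖r‖^2 = (c * ‖r‖^2) * t := by ring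
      _ ≤ c * ‖r‖^2 := mul_le_of_le_one_right (mul_nonneg hc (sq_nonneg ‖r‖)) hfrac2
  have hexp : ‖r‖^2 * (1 - c * t) = ‖r‖^2 - c * t * ‖r‖^2 := by ring
  linarith
end

section
/- Let (a_k)_{k≥0} be a nonincreasing sequence of nonnegative real numbers, and let c be a constant with 0 < c ≤ 1 such that for all k ≥ 1, a_{k+1}² ≤ a_k² · ( 1 − c · a_k² / (a_k² + (a_k + a_{k−1})²) ), with the convention that the factor is 1 when a_k = 0. Then a_k → 0 as k → ∞. -/
/-- If `(a_k)` is a nonincreasing sequence of nonnegative reals and `0 < c ≤ 1` is such that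
for all `k ≥ 1`, `a_{k+1}² ≤ a_k² (1 − c · a_k²/(a_k² + (a_k + a_{k−1})²))`
(with the factor read as `1` when `a_k = 0`), then `a_k → 0`. -/
theorem stmt7 (a : ℕ → ℝ) (hnn : ∀ k, 0 ≤ a k) (hmono : ∀ k, a (k + 1) ≤ a k)
    (c : ℝ) (hc0 : 0 < c) (hc1 : c ≤ 1)
    (hrec : ∀ k, 1 ≤ k → a (k + 1) ^ 2 ≤ a k ^ 2 *
      (1 - c * (if a k = 0 then 1
        else a k ^ 2 / (a k ^ 2 + (a k + a (k - 1)) ^ 2)))) :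
    Filter.Tendsto a Filter.atTop (nhds 0) := by
  have hA : Antitone a := antitone_nat_of_succ_le hmono
  have hbdd : BddBelow (Set.range a) := ⟨0, by rintro _ ⟨k, rfl⟩; exact hnn k⟩
  have htend : Filter.Tendsto a Filter.atTop (nhds (⨅ k, a k)) :=
    tendsto_atTop_ciInf hA hbdd
  suffices h : (⨅ k, a k) = 0 by rwa [h] at htend
  set L := ⨅ k, a k with hLdef
  have hL0 : 0 ≤ L := le_ciInf hnn
  have hLle : ∀ k, L ≤ a k := fun k => ciInf_le hbdd k
  by_contra hne
  have hL : 0 < L := lt_of_le_of_ne hL0 (Ne.symm hne)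
  have ha0 : 0 < a 0 := lt_of_lt_of_le hL (hLle 0)
  set ε := c * L ^ 4 / (5 * a 0 ^ 2) with hε
  have hεpos : 0 < ε := by positivity
  have key : ∀ k, 1 ≤ k → a (k + 1) ^ 2 ≤ a k ^ 2 - ε := by
    intro k hk
    have hak : 0 < a k := lt_of_lt_of_le hL (hLle k)
    have h := hrec k hk
    rw [if_neg (ne_of_gt hak)] at h
    have hle0 : a k ≤ a 0 := hA (Nat.zero_le k)
    have hle1 : a (k - 1) ≤ a 0 := hA (Nat.zero_le _)
    have hden : a k ^ 2 + (a k + a (k - 1)) ^ 2 ≤ 5 * a 0 ^ 2 := by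
      nlinarith [hnn k, hnn (k - 1)]
    have hdenpos : 0 < a k ^ 2 + (a k + a (k - 1)) ^ 2 := by positivity
    have h2 : L ^ 2 ≤ a k ^ 2 := by nlinarith [hLle k]
    have h4 : L ^ 4 ≤ a k ^ 4 := by nlinarith [h2, sq_nonneg L, sq_nonneg (a k)]
    have hεle : ε ≤ a k ^ 2 * (c * (a k ^ 2 / (a k ^ 2 + (a k + a (k - 1)) ^ 2))) := by
      rw [hε, div_le_iff₀ (by positivity)]
      have : a k ^ 2 * (c * (a k ^ 2 / (a k ^ 2 + (a k + a (k - 1)) ^ 2)))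
          = c * a k ^ 4 / (a k ^ 2 + (a k + a (k - 1)) ^ 2) := by
        field_simp
      rw [this, div_mul_eq_mul_div, le_div_iff₀ hdenpos]
      have t1 : c * L ^ 4 * (a k ^ 2 + (a k + a (k - 1)) ^ 2) ≤ c * L ^ 4 * (5 * a 0 ^ 2) :=
        mul_le_mul_of_nonneg_left hden (by positivity)
      have t2 : c * L ^ 4 * (5 * a 0 ^ 2) ≤ c * a k ^ 4 * (5 * a 0 ^ 2) := by
        have := mul_le_mul_of_nonneg_left h4 hc0.le
        nlinarith [sq_nonneg (a 0)]
      linarith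
    nlinarith
  have step : ∀ n : ℕ, a (n + 2) ^ 2 ≤ a 1 ^ 2 - n * ε := by
    intro n
    induction n with
    | zero =>
      have := key 1 le_rfl
      push_cast
      linarith
    | succ m ih =>
      have := key (m + 2) (by omega)
      push_cast
      nlinarith
  obtain ⟨n, hn⟩ := exists_nat_gt (a 1 ^ 2 / ε)
  have h1 : a 1 ^ 2 < n * ε := by
    rwa [div_lt_iff₀ hεpos] at hn
  have := step n
  nlinarith [sq_nonneg (a (n + 2))]
end

section
/- Let A be a real m×n matrix and γ > 0 a real number. Set S = γ I_n + Aᵀ A (which is symmetric positive definite, hence invertible). Then ‖S⁻¹ Aᵀ‖₂ ≤ 1 / (2 √γ). -/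
open Matrix RealInnerProductSpace

private lemma aux_ineq (s a b nx : ℝ) (hs : 0 < s) (ha0 : 0 ≤ a) (hb0 : 0 ≤ b)
    (hx0 : 0 ≤ nx) (h : s ^ 2 * a ^ 2 + b ^ 2 ≤ b * nx) : a ≤ 1 / (2 * s) * nx := by
  rcases eq_or_lt_of_le hb0 with hbz | hbp
  · have h1 : a ^ 2 ≤ 0 := by nlinarith [sq_nonneg a, mul_pos hs hs]
    have haz : a = 0 := by
      have := le_antisymm h1 (sq_nonneg a)
      exact pow_eq_zero_iff two_ne_zero |>.mp this
    rw [haz]; positivity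
  · have hamgm : 2 * s * a * b ≤ s ^ 2 * a ^ 2 + b ^ 2 := by nlinarith [sq_nonneg (s * a - b)]
    have h2sa : 2 * s * a ≤ nx := by
      have h3 := hamgm.trans h
      calc 2 * s * a = (2 * s * a * b) / b := by field_simp
        _ ≤ (b * nx) / b := by gcongr
        _ = nx := by field_simp
    rw [div_mul_eq_mul_div, one_mul, le_div_iff₀ (by positivity)]
    linarith

/-- For `S = γ I + AᵀA` with `γ > 0`, `S` is symmetric positive definite (hence invertible)
and `‖S⁻¹ Aᵀ‖₂ ≤ 1/(2√γ)`. -/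
theorem stmt10 {m n : ℕ} (A : Matrix (Fin m) (Fin n) ℝ) (γ : ℝ) (hγ : 0 < γ)
    (S : Matrix (Fin n) (Fin n) ℝ)
    (hS : S = γ • (1 : Matrix (Fin n) (Fin n) ℝ) + Aᵀ * A) :
    S.PosDef ∧ spec (S⁻¹ * Aᵀ) ≤ 1 / (2 * Real.sqrt γ) := by
  have hAt : Aᵀ = Aᴴ := (Matrix.conjTranspose_eq_transpose_of_trivial A).symm
  have hone : (γ • (1 : Matrix (Fin n) (Fin n) ℝ)).PosDef := by
    refine Matrix.posDef_iff_dotProduct_mulVec.mpr ⟨?_, fun x hx => ?_⟩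
    · simp [Matrix.IsHermitian]
    · have : (γ • (1 : Matrix (Fin n) (Fin n) ℝ)) *ᵥ x = γ • x := by
        simp [Matrix.smul_mulVec]
      rw [this]
      rw [dotProduct_smul]
      exact mul_pos hγ (Matrix.dotProduct_star_self_pos_iff.mpr hx)
  have hpd : S.PosDef := by
    rw [hS]
    exact hone.add_posSemidef (hAt ▸ Matrix.posSemidef_conjTranspose_mul_self A)
  refine ⟨hpd, ?_⟩
  set s := Real.sqrt γ with hsdef
  have hs : 0 < s := Real.sqrt_pos.mpr hγ
  have hs2 : s ^ 2 = γ := Real.sq_sqrt hγ.le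
  have hc : (0:ℝ) ≤ 1 / (2 * s) := by positivity
  rw [spec]
  refine ContinuousLinearMap.opNorm_le_bound _ hc fun x => ?_
  set y : EuclideanSpace ℝ (Fin n) := Matrix.toEuclideanLin (S⁻¹ * Aᵀ) x with hy
  have hTx : (LinearMap.toContinuousLinearMap (Matrix.toEuclideanLin (S⁻¹ * Aᵀ))) x = y := rfl
  rw [hTx]
  -- key identity : S applied to y equals Aᵀ applied to x
  have hSinv : S * S⁻¹ = 1 := Matrix.mul_nonsing_inv S (Matrix.isUnit_iff_isUnit_det _ |>.mp hpd.isUnit)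
  have hkey : Matrix.toEuclideanLin S y = Matrix.toEuclideanLin Aᵀ x := by
    rw [hy, Matrix.toEuclideanLin_apply, Matrix.toEuclideanLin_apply, Matrix.toEuclideanLin_apply]
    simp [Matrix.mulVec_mulVec, ← Matrix.mul_assoc, hSinv]
  -- inner product computation
  have hadj : Matrix.toEuclideanLin Aᵀ = LinearMap.adjoint (Matrix.toEuclideanLin A) := by
    rw [hAt]; exact Matrix.toEuclideanLin_conjTranspose_eq_adjoint A
  have hSy : Matrix.toEuclideanLin S y
      = γ • y + Matrix.toEuclideanLin Aᵀ (Matrix.toEuclideanLin A y) := by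
    rw [hS, map_add, _root_.map_smul, LinearMap.add_apply, LinearMap.smul_apply]
    congr 1
    · congr 1
      rw [Matrix.toEuclideanLin_apply]
      simp
    · rw [Matrix.toEuclideanLin_apply, Matrix.toEuclideanLin_apply, Matrix.toEuclideanLin_apply]
      simp [Matrix.mulVec_mulVec]
  have hinner : γ * ‖y‖ ^ 2 + ‖Matrix.toEuclideanLin A y‖ ^ 2
      = ⟪Matrix.toEuclideanLin A y, x⟫ := by
    have h1 : ⟪y, Matrix.toEuclideanLin S y⟫ = γ * ‖y‖ ^ 2 + ‖Matrix.toEuclideanLin A y‖ ^ 2 := by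
      rw [hSy, inner_add_right, real_inner_smul_right, real_inner_self_eq_norm_sq, hadj,
        LinearMap.adjoint_inner_right, real_inner_self_eq_norm_sq]
    have h2 : ⟪y, Matrix.toEuclideanLin Aᵀ x⟫ = ⟪Matrix.toEuclideanLin A y, x⟫ := by
      rw [hadj, LinearMap.adjoint_inner_right]
    rw [← h1, hkey, h2]
  have hCS : ⟪Matrix.toEuclideanLin A y, x⟫ ≤ ‖Matrix.toEuclideanLin A y‖ * ‖x‖ :=
    real_inner_le_norm _ _
  exact aux_ineq s ‖y‖ ‖Matrix.toEuclideanLin A y‖ ‖x‖ hs (norm_nonneg _) (norm_nonneg _)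
    (norm_nonneg _) (by rw [hs2, hinner]; exact hCS)
end

section
/- Let A be a real m×n matrix, μ ≥ 0 and γ > 0 real numbers, and set ε = γ − μ². Let K = [I_m, A; −Aᵀ, μ² I_n], T = [I_m, A; −Aᵀ, γ I_n], and S = γ I_n + Aᵀ A. Then T is invertible and K T⁻¹ = I_{m+n} − ε · B, where B is the block matrix [0, 0; S⁻¹ Aᵀ, S⁻¹] (zero blocks in the first block-row, S⁻¹Aᵀ and S⁻¹ in the second block-row). -/
open Matrix

/-- With `K = [I, A; −Aᵀ, μ² I]`, `T = [I, A; −Aᵀ, γ I]`, `S = γ I + AᵀA` and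
`ε = γ − μ²`, `T` is invertible and `K T⁻¹ = I − ε [0, 0; S⁻¹Aᵀ, S⁻¹]`. -/
theorem stmt13 {m n : ℕ} (A : Matrix (Fin m) (Fin n) ℝ) (μ γ ε : ℝ)
    (hμ : 0 ≤ μ) (hγ : 0 < γ) (hε : ε = γ - μ ^ 2)
    (K T : Matrix (Fin m ⊕ Fin n) (Fin m ⊕ Fin n) ℝ)
    (hK : K = Matrix.fromBlocks 1 A (-Aᵀ) (μ ^ 2 • (1 : Matrix (Fin n) (Fin n) ℝ)))
    (hT : T = Matrix.fromBlocks 1 A (-Aᵀ) (γ • (1 : Matrix (Fin n) (Fin n) ℝ)))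
    (S : Matrix (Fin n) (Fin n) ℝ)
    (hS : S = γ • (1 : Matrix (Fin n) (Fin n) ℝ) + Aᵀ * A) :
    IsUnit T ∧
      K * T⁻¹ = 1 - ε • Matrix.fromBlocks 0 0 (S⁻¹ * Aᵀ) S⁻¹ := by
  -- S is positive definite, hence invertible
  have hSpd : S.PosDef := by
    rw [hS]
    refine Matrix.PosDef.add_posSemidef ?_ ?_
    · have h2 : γ • (1 : Matrix (Fin n) (Fin n) ℝ)
          = Matrix.diagonal (fun _ => γ) := by
        ext i j
        simp [Matrix.diagonal, Matrix.one_apply]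
      rw [h2]
      exact Matrix.posDef_diagonal_iff.mpr fun _ => hγ
    · have h1 : Aᵀ * A = Aᴴ * A := by
        rw [Matrix.conjTranspose_eq_transpose_of_trivial]
      rw [h1]
      exact Matrix.posSemidef_conjTranspose_mul_self A
  have hSu : IsUnit S := hSpd.isUnit
  have hS1 : S * S⁻¹ = 1 := Matrix.mul_nonsing_inv _ (Matrix.isUnit_iff_isUnit_det _ |>.1 hSu)
  have hS2 : S⁻¹ * S = 1 := Matrix.nonsing_inv_mul _ (Matrix.isUnit_iff_isUnit_det _ |>.1 hSu)
  have hAA : Aᵀ * A = S - γ • (1 : Matrix (Fin n) (Fin n) ℝ) := by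
    rw [hS]; abel
  -- key computation: AᵀA S⁻¹ = 1 - γ S⁻¹ and AᵀA S⁻¹ Aᵀ = Aᵀ - γ S⁻¹ Aᵀ
  have key1 : Aᵀ * A * S⁻¹ = 1 - γ • S⁻¹ := by
    rw [hAA, sub_mul, hS1, smul_mul_assoc, one_mul]
  have key2 : Aᵀ * (A * (S⁻¹ * Aᵀ)) = Aᵀ - γ • (S⁻¹ * Aᵀ) := by
    rw [← Matrix.mul_assoc, ← Matrix.mul_assoc, key1, Matrix.sub_mul,
      Matrix.one_mul, Matrix.smul_mul]
  -- the explicit inverse of T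
  set Ti : Matrix (Fin m ⊕ Fin n) (Fin m ⊕ Fin n) ℝ :=
    Matrix.fromBlocks (1 - A * S⁻¹ * Aᵀ) (-(A * S⁻¹)) (S⁻¹ * Aᵀ) S⁻¹ with hTi
  have hTTi : T * Ti = 1 := by
    rw [hT, hTi, Matrix.fromBlocks_multiply, ← Matrix.fromBlocks_one]
    refine Matrix.fromBlocks_inj.mpr ⟨?_, ?_, ?_, ?_⟩
    · rw [Matrix.one_mul, ← Matrix.mul_assoc]; abel
    · rw [Matrix.one_mul]; abel
    · rw [Matrix.neg_mul, Matrix.mul_sub, Matrix.mul_one, Matrix.mul_assoc A,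
        key2, Matrix.smul_mul, Matrix.one_mul]
      module
    · rw [Matrix.neg_mul, Matrix.mul_neg, neg_neg, ← Matrix.mul_assoc, key1,
        Matrix.smul_mul, Matrix.one_mul]
      module
  have hTu : IsUnit T := ⟨⟨T, Ti, hTTi, mul_eq_one_comm.mp hTTi⟩, rfl⟩
  refine ⟨hTu, ?_⟩
  have hTinv : T⁻¹ = Ti := Matrix.inv_eq_right_inv hTTi
  rw [hTinv, hK, hTi, Matrix.fromBlocks_multiply]
  have hone : (1 : Matrix (Fin m ⊕ Fin n) (Fin m ⊕ Fin n) ℝ)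
      = Matrix.fromBlocks 1 0 0 1 := (Matrix.fromBlocks_one).symm
  have hsm : ε • Matrix.fromBlocks (0 : Matrix (Fin m) (Fin m) ℝ)
        (0 : Matrix (Fin m) (Fin n) ℝ) (S⁻¹ * Aᵀ) S⁻¹
      = Matrix.fromBlocks 0 0 (ε • (S⁻¹ * Aᵀ)) (ε • S⁻¹) := by
    ext (i | i) (j | j) <;> simp [Matrix.fromBlocks]
  have hsub : Matrix.fromBlocks (1 : Matrix (Fin m) (Fin m) ℝ)
        (0 : Matrix (Fin m) (Fin n) ℝ) (0 : Matrix (Fin n) (Fin m) ℝ)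
        (1 : Matrix (Fin n) (Fin n) ℝ)
        - Matrix.fromBlocks 0 0 (ε • (S⁻¹ * Aᵀ)) (ε • S⁻¹)
      = Matrix.fromBlocks 1 0 (-(ε • (S⁻¹ * Aᵀ))) (1 - ε • S⁻¹) := by
    ext (i | i) (j | j) <;> simp [Matrix.fromBlocks]
  rw [hone, hsm, hsub]
  refine Matrix.fromBlocks_inj.mpr ⟨?_, ?_, ?_, ?_⟩
  · rw [Matrix.one_mul, ← Matrix.mul_assoc]; abel
  · rw [Matrix.one_mul]; abel
  · rw [Matrix.neg_mul, Matrix.mul_sub, Matrix.mul_one, Matrix.mul_assoc A,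
      key2, Matrix.smul_mul, Matrix.one_mul, hε]
    module
  · rw [Matrix.neg_mul, Matrix.mul_neg, neg_neg, ← Matrix.mul_assoc, key1,
      Matrix.smul_mul, Matrix.one_mul, hε]
    module
end

section
/- Let A be a real m×n matrix, μ ≥ 0, and γ > μ². Set K = [I_m, A; −Aᵀ, μ² I_n], T = [I_m, A; −Aᵀ, γ I_n], η̄ = (γ − μ²)/(2√γ), and let λ_min denote the smallest eigenvalue of AᵀA. Then for every nonzero x ∈ ℂ^{m+n}, the real part of ⟨K T⁻¹ x, x⟩ / ⟨x, x⟩ lies in the open interval ( (μ² + λ_min)/(γ + λ_min) − η̄ , 1 + η̄ ). -/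
open Matrix
open scoped ComplexInnerProductSpace

/-- Action of a (complexified) real matrix on complex Euclidean space. -/
noncomputable def mulEC {ι : Type} [Fintype ι] [DecidableEq ι]
    (W : Matrix ι ι ℝ) (x : EuclideanSpace ℂ ι) : EuclideanSpace ℂ ι :=
  Matrix.toEuclideanLin (W.map Complex.ofReal) x


lemma re_inner_mulEC {ι : Type} [Fintype ι] [DecidableEq ι]
    (W : Matrix ι ι ℝ) (x : EuclideanSpace ℂ ι) :
    (⟪mulEC W x, x⟫).re =
      (fun i => (x i).re) ⬝ᵥ (W *ᵥ fun i => (x i).re) +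
      (fun i => (x i).im) ⬝ᵥ (W *ᵥ fun i => (x i).im) := by
  have hcoord : ∀ i, mulEC W x i = ∑ k, (W i k : ℂ) * x k := fun i => rfl
  have h1 : ⟪mulEC W x, x⟫ = ∑ i, (starRingEnd ℂ) (mulEC W x i) * x i := by
    simp [PiLp.inner_apply, RCLike.inner_apply]
    exact Finset.sum_congr rfl fun i _ => mul_comm _ _
  rw [h1, Complex.re_sum]
  simp only [hcoord, map_sum, _root_.map_mul, Complex.conj_ofReal, Finset.sum_mul, Complex.re_sum]
  simp only [dotProduct, Matrix.mulVec, Finset.mul_sum]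
  rw [← Finset.sum_add_distrib]
  refine Finset.sum_congr rfl fun i _ => ?_
  rw [← Finset.sum_add_distrib]
  refine Finset.sum_congr rfl fun k _ => ?_
  simp [Complex.mul_re, Complex.mul_im]
  ring

lemma dot_move {p q : ℕ} (M : Matrix (Fin p) (Fin q) ℝ) (a : Fin q → ℝ) (b : Fin p → ℝ) :
    (M *ᵥ a) ⬝ᵥ b = a ⬝ᵥ (Mᵀ *ᵥ b) := by
  rw [dotProduct_comm, Matrix.dotProduct_mulVec, ← Matrix.mulVec_transpose,
    dotProduct_comm]

lemma dot_self_nonneg {p : ℕ} (u : Fin p → ℝ) : 0 ≤ u ⬝ᵥ u :=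
  Finset.sum_nonneg fun i _ => mul_self_nonneg (u i)

lemma core_bounds {m n : ℕ} (A : Matrix (Fin m) (Fin n) ℝ) (γ : ℝ) (hγ0 : 0 < γ)
    (hAA : (Aᵀ * A).IsHermitian) :
    ∃ R : Matrix (Fin n) (Fin n) ℝ,
      (γ • (1 : Matrix (Fin n) (Fin n) ℝ) + Aᵀ * A) * R = 1 ∧
      (∀ v : Fin n → ℝ, 0 ≤ v ⬝ᵥ (R *ᵥ v)) ∧
      (∀ v : Fin n → ℝ, (γ + ⨅ i, hAA.eigenvalues i) * (v ⬝ᵥ (R *ᵥ v)) ≤ v ⬝ᵥ v) ∧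
      (∀ (u : Fin m → ℝ) (v : Fin n → ℝ),
        (4 * γ) * (v ⬝ᵥ ((R * Aᵀ) *ᵥ u))^2 ≤ (v ⬝ᵥ v) * (u ⬝ᵥ u)) := by
  classical
  set U : Matrix (Fin n) (Fin n) ℝ := (hAA.eigenvectorUnitary : Matrix (Fin n) (Fin n) ℝ) with hU
  set lam : Fin n → ℝ := hAA.eigenvalues with hlam
  have hstar : star U = Uᵀ := by
    rw [Matrix.star_eq_conjTranspose, Matrix.conjTranspose_eq_transpose_of_trivial]
  have hUUt : U * Uᵀ = 1 := by
    rw [← hstar]; exact (Matrix.mem_unitaryGroup_iff).mp hAA.eigenvectorUnitary.2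
  have hUtU : Uᵀ * U = 1 := by
    rw [← hstar]; exact (Matrix.mem_unitaryGroup_iff').mp hAA.eigenvectorUnitary.2
  have hPSD : (Aᵀ * A).PosSemidef := by
    have := Matrix.posSemidef_conjTranspose_mul_self A
    rwa [Matrix.conjTranspose_eq_transpose_of_trivial] at this
  have hlam0 : ∀ i, 0 ≤ lam i := fun i => hPSD.eigenvalues_nonneg i
  have hd : ∀ i, 0 < γ + lam i := fun i => by have := hlam0 i; linarith
  have hspec : Aᵀ * A = U * diagonal lam * Uᵀ := by
    conv_lhs => rw [hAA.spectral_theorem]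
    rw [Unitary.conjStarAlgAut_apply, ← hU, hstar]
    norm_num [hU, hlam]
  have hmul : ∀ f g : Fin n → ℝ, (U * diagonal f * Uᵀ) * (U * diagonal g * Uᵀ)
      = U * diagonal (fun i => f i * g i) * Uᵀ := by
    intro f g
    have hmid : Uᵀ * (U * diagonal g * Uᵀ) = diagonal g * Uᵀ := by
      rw [← Matrix.mul_assoc, ← Matrix.mul_assoc, hUtU, one_mul]
    rw [Matrix.mul_assoc (U * diagonal f), hmid, ← Matrix.mul_assoc,
      Matrix.mul_assoc U, Matrix.diagonal_mul_diagonal]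
  have hq : ∀ (e : Fin n → ℝ) (v : Fin n → ℝ),
      v ⬝ᵥ ((U * diagonal e * Uᵀ) *ᵥ v) = ∑ i, e i * ((Uᵀ *ᵥ v) i)^2 := by
    intro e v
    rw [← Matrix.mulVec_mulVec, ← Matrix.mulVec_mulVec, Matrix.dotProduct_mulVec,
      ← Matrix.mulVec_transpose]
    simp only [dotProduct, Matrix.mulVec_diagonal]
    exact Finset.sum_congr rfl fun i _ => by ring
  have hc2 : ∀ v : Fin n → ℝ, ∑ i, ((Uᵀ *ᵥ v) i)^2 = v ⬝ᵥ v := by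
    intro v
    have := hq (fun _ => 1) v
    simpa [Matrix.diagonal_one, hUUt] using this.symm
  set R : Matrix (Fin n) (Fin n) ℝ := U * diagonal (fun i => (γ + lam i)⁻¹) * Uᵀ with hR
  have hγ1 : γ • (1 : Matrix (Fin n) (Fin n) ℝ) = U * diagonal (fun _ => γ) * Uᵀ := by
    have hd1 : (diagonal fun _ : Fin n => γ) = γ • (1 : Matrix (Fin n) (Fin n) ℝ) := by
      ext i j
      by_cases h : i = j <;>
        simp [Matrix.diagonal_apply, Matrix.one_apply, h]
    rw [hd1, Matrix.mul_smul, mul_one, Matrix.smul_mul, hUUt]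
  have h1 : γ • (1 : Matrix (Fin n) (Fin n) ℝ) + Aᵀ * A
      = U * diagonal (fun i => γ + lam i) * Uᵀ := by
    rw [hγ1]
    conv_lhs => rw [hspec]
    rw [← Matrix.add_mul, ← Matrix.mul_add, ← Matrix.diagonal_add]
  have hSR : (γ • (1 : Matrix (Fin n) (Fin n) ℝ) + Aᵀ * A) * R = 1 := by
    rw [h1, hR, hmul]
    have : (fun i => (γ + lam i) * (γ + lam i)⁻¹) = fun _ : Fin n => (1:ℝ) := by
      funext i; exact mul_inv_cancel₀ (hd i).ne'
    rw [this, Matrix.diagonal_one, mul_one, hUUt]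
  have hRsym : Rᵀ = R := by
    rw [hR]
    simp [Matrix.transpose_mul, Matrix.diagonal_transpose, Matrix.mul_assoc]
  refine ⟨R, hSR, ?_, ?_, ?_⟩
  · intro v
    rw [hR, hq]
    exact Finset.sum_nonneg fun i _ =>
      mul_nonneg (inv_nonneg.2 (hd i).le) (sq_nonneg _)
  · intro v
    rw [hR, hq, ← hc2 v, Finset.mul_sum]
    apply Finset.sum_le_sum
    intro i _
    have hlmin_le : (⨅ j, hAA.eigenvalues j) ≤ lam i := ciInf_le (Finite.bddBelow_range _) i
    have hinv : (γ + lam i) * (γ + lam i)⁻¹ = 1 := mul_inv_cancel₀ (hd i).ne'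
    calc (γ + ⨅ j, hAA.eigenvalues j) * ((γ + lam i)⁻¹ * ((Uᵀ *ᵥ v) i)^2)
        ≤ (γ + lam i) * ((γ + lam i)⁻¹ * ((Uᵀ *ᵥ v) i)^2) := by
          apply mul_le_mul_of_nonneg_right (by linarith)
          exact mul_nonneg (inv_nonneg.2 (hd i).le) (sq_nonneg _)
      _ = ((Uᵀ *ᵥ v) i)^2 := by rw [← mul_assoc, hinv, one_mul]
  · intro u v
    set w : Fin m → ℝ := A *ᵥ (R *ᵥ v) with hw
    have hcross : v ⬝ᵥ ((R * Aᵀ) *ᵥ u) = w ⬝ᵥ u := by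
      rw [hw, ← Matrix.mulVec_mulVec, dotProduct_comm v, dot_move, hRsym,
        dot_move, Matrix.transpose_transpose, dotProduct_comm u]
    have hww : w ⬝ᵥ w = ∑ i, ((γ + lam i)⁻¹ * lam i * (γ + lam i)⁻¹) * ((Uᵀ *ᵥ v) i)^2 := by
      have hRMR : R * (Aᵀ * A) * R
          = U * diagonal (fun i => (γ + lam i)⁻¹ * lam i * (γ + lam i)⁻¹) * Uᵀ := by
        rw [hspec, hR, hmul, hmul]
      rw [hw, dot_move, Matrix.mulVec_mulVec _ Aᵀ A, dot_move, hRsym,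
        Matrix.mulVec_mulVec _ (Aᵀ * A) R, Matrix.mulVec_mulVec _ R _,
        ← Matrix.mul_assoc, hRMR, hq]
    have hCS : (w ⬝ᵥ u)^2 ≤ (w ⬝ᵥ w) * (u ⬝ᵥ u) := by
      have := Finset.sum_mul_sq_le_sq_mul_sq Finset.univ w u
      simpa [dotProduct, pow_two] using this
    have hterm : ∀ i, (4*γ) * (((γ + lam i)⁻¹ * lam i * (γ + lam i)⁻¹) * ((Uᵀ *ᵥ v) i)^2)
        ≤ ((Uᵀ *ᵥ v) i)^2 := by
      intro i
      have h := hd i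
      have hinv : (γ + lam i) * (γ + lam i)⁻¹ = 1 := mul_inv_cancel₀ h.ne'
      have h4 : 4*γ*((γ + lam i)⁻¹ * lam i * (γ + lam i)⁻¹) ≤ 1 := by
        nlinarith [sq_nonneg (γ - lam i), sq_nonneg ((γ + lam i)⁻¹), hlam0 i,
          inv_nonneg.2 h.le]
      nlinarith [sq_nonneg ((Uᵀ *ᵥ v) i)]
    calc (4*γ) * (v ⬝ᵥ ((R * Aᵀ) *ᵥ u))^2 = (4*γ) * (w ⬝ᵥ u)^2 := by rw [hcross]
      _ ≤ (4*γ) * ((w ⬝ᵥ w) * (u ⬝ᵥ u)) := by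
          apply mul_le_mul_of_nonneg_left hCS (by linarith)
      _ = ((4*γ) * (w ⬝ᵥ w)) * (u ⬝ᵥ u) := by ring
      _ ≤ (v ⬝ᵥ v) * (u ⬝ᵥ u) := by
          apply mul_le_mul_of_nonneg_right _ (dot_self_nonneg u)
          rw [hww, Finset.mul_sum, ← hc2 v]
          exact Finset.sum_le_sum fun i _ => hterm i

set_option maxHeartbeats 1000000 in
/-- Real-part bounds on the field of values of `K T⁻¹` with
`K = [I, A; −Aᵀ, μ² I]`, `T = [I, A; −Aᵀ, γ I]`, `γ > μ²`, `η̄ = (γ − μ²)/(2√γ)` and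
`λ_min` the smallest eigenvalue of `AᵀA`:
`Re(⟨K T⁻¹ x, x⟩/⟨x, x⟩) ∈ ((μ² + λ_min)/(γ + λ_min) − η̄, 1 + η̄)` for every `x ≠ 0`. -/
theorem stmt14 {m n : ℕ} (A : Matrix (Fin m) (Fin n) ℝ) (μ γ : ℝ)
    (hμ : 0 ≤ μ) (hγ : μ ^ 2 < γ)
    (K T : Matrix (Fin m ⊕ Fin n) (Fin m ⊕ Fin n) ℝ)
    (hK : K = Matrix.fromBlocks 1 A (-Aᵀ) (μ ^ 2 • (1 : Matrix (Fin n) (Fin n) ℝ)))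
    (hT : T = Matrix.fromBlocks 1 A (-Aᵀ) (γ • (1 : Matrix (Fin n) (Fin n) ℝ)))
    (η : ℝ) (hη : η = (γ - μ ^ 2) / (2 * Real.sqrt γ))
    (hAA : (Aᵀ * A).IsHermitian)
    (lmin : ℝ) (hlmin : lmin = ⨅ i, hAA.eigenvalues i)
    (x : EuclideanSpace ℂ (Fin m ⊕ Fin n)) (hx : x ≠ 0) :
    (⟪mulEC (K * T⁻¹) x, x⟫ / ⟪x, x⟫).re ∈
      Set.Ioo ((μ ^ 2 + lmin) / (γ + lmin) - η) (1 + η) := by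
  have hγ0 : 0 < γ := lt_of_le_of_lt (sq_nonneg μ) hγ
  obtain ⟨R, hSR, hRpos, hRupper, hRcross⟩ := core_bounds A γ hγ0 hAA
  set c : ℝ := μ ^ 2 - γ with hc
  have hcneg : c < 0 := by rw [hc]; linarith
  have hkeyN : γ • R + Aᵀ * (A * R) = 1 := by
    have h := hSR
    simp only [Matrix.add_mul, Matrix.smul_mul, Matrix.one_mul, Matrix.mul_assoc] at h
    exact h
  have hkeyAt : γ • (R * Aᵀ) + Aᵀ * (A * (R * Aᵀ)) = Aᵀ := by
    have h := congrArg (fun M => M * Aᵀ) hSR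
    simp only [Matrix.add_mul, Matrix.smul_mul, Matrix.one_mul, Matrix.mul_assoc] at h
    exact h
  set Tinv : Matrix (Fin m ⊕ Fin n) (Fin m ⊕ Fin n) ℝ :=
    fromBlocks (1 - A * (R * Aᵀ)) (-(A * R)) (R * Aᵀ) R with hTinvdef
  have e11 : (1 : Matrix (Fin m) (Fin m) ℝ) * (1 - A * (R * Aᵀ)) + A * (R * Aᵀ) = 1 := by
    rw [Matrix.one_mul, sub_add_cancel]
  have e12 : (1 : Matrix (Fin m) (Fin m) ℝ) * (-(A * R)) + A * R = 0 := by
    rw [Matrix.one_mul, neg_add_cancel]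
  have e21 : (-Aᵀ) * (1 - A * (R * Aᵀ)) + (γ • (1 : Matrix (Fin n) (Fin n) ℝ)) * (R * Aᵀ)
      = 0 := by
    calc (-Aᵀ) * (1 - A * (R * Aᵀ)) + (γ • (1 : Matrix (Fin n) (Fin n) ℝ)) * (R * Aᵀ)
        = -(Aᵀ) + (γ • (R * Aᵀ) + Aᵀ * (A * (R * Aᵀ))) := by
          simp only [Matrix.mul_sub, Matrix.mul_one, Matrix.neg_mul, neg_neg, sub_neg_eq_add,
            Matrix.mul_assoc, Matrix.smul_mul, Matrix.one_mul]
          abel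
      _ = 0 := by rw [hkeyAt, neg_add_cancel]
  have e22 : (-Aᵀ) * (-(A * R)) + (γ • (1 : Matrix (Fin n) (Fin n) ℝ)) * R = 1 := by
    calc (-Aᵀ) * (-(A * R)) + (γ • (1 : Matrix (Fin n) (Fin n) ℝ)) * R
        = γ • R + Aᵀ * (A * R) := by
          simp only [Matrix.neg_mul, Matrix.mul_neg, neg_neg, Matrix.mul_assoc,
            Matrix.smul_mul, Matrix.one_mul]
          abel
      _ = 1 := hkeyN
  have hTTinv : T * Tinv = 1 := by
    rw [hT, hTinvdef, Matrix.fromBlocks_multiply, e11, e12, e21, e22, Matrix.fromBlocks_one]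
  have hTinvEq : T⁻¹ = Tinv := Matrix.inv_eq_right_inv hTTinv
  have hsplit : (μ ^ 2 • (1 : Matrix (Fin n) (Fin n) ℝ))
      = γ • (1 : Matrix (Fin n) (Fin n) ℝ) + c • (1 : Matrix (Fin n) (Fin n) ℝ) := by
    rw [← add_smul, hc]; ring_nf
  have hKT : K * T⁻¹ = fromBlocks 1 0 (c • (R * Aᵀ)) (1 + c • R) := by
    have f21 : (-Aᵀ) * (1 - A * (R * Aᵀ)) + (μ ^ 2 • (1 : Matrix (Fin n) (Fin n) ℝ)) * (R * Aᵀ)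
        = c • (R * Aᵀ) := by
      calc (-Aᵀ) * (1 - A * (R * Aᵀ)) + (μ ^ 2 • (1 : Matrix (Fin n) (Fin n) ℝ)) * (R * Aᵀ)
          = (-(Aᵀ) + (γ • (R * Aᵀ) + Aᵀ * (A * (R * Aᵀ)))) + c • (R * Aᵀ) := by
            rw [hsplit]
            simp only [Matrix.mul_sub, Matrix.mul_one, Matrix.neg_mul, neg_neg, sub_neg_eq_add,
              Matrix.mul_assoc, Matrix.add_mul, Matrix.smul_mul, Matrix.one_mul]
            abel
        _ = c • (R * Aᵀ) := by rw [hkeyAt, neg_add_cancel, zero_add]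
    have f22 : (-Aᵀ) * (-(A * R)) + (μ ^ 2 • (1 : Matrix (Fin n) (Fin n) ℝ)) * R
        = 1 + c • R := by
      calc (-Aᵀ) * (-(A * R)) + (μ ^ 2 • (1 : Matrix (Fin n) (Fin n) ℝ)) * R
          = (γ • R + Aᵀ * (A * R)) + c • R := by
            rw [hsplit]
            simp only [Matrix.neg_mul, Matrix.mul_neg, neg_neg, Matrix.add_mul,
              Matrix.smul_mul, Matrix.one_mul, Matrix.mul_assoc]
            abel
        _ = 1 + c • R := by rw [hkeyN]
    rw [hTinvEq, hK, hTinvdef, Matrix.fromBlocks_multiply, e11, e12, f21, f22]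
  -- real and imaginary parts
  set a : (Fin m ⊕ Fin n) → ℝ := fun i => (x i).re with ha
  set b : (Fin m ⊕ Fin n) → ℝ := fun i => (x i).im with hb
  have hQ : ∀ y : (Fin m ⊕ Fin n) → ℝ, y ⬝ᵥ ((K * T⁻¹) *ᵥ y) =
      ((y ∘ Sum.inl) ⬝ᵥ (y ∘ Sum.inl) + (y ∘ Sum.inr) ⬝ᵥ (y ∘ Sum.inr))
      + c * ((y ∘ Sum.inr) ⬝ᵥ ((R * Aᵀ) *ᵥ (y ∘ Sum.inl)))
      + c * ((y ∘ Sum.inr) ⬝ᵥ (R *ᵥ (y ∘ Sum.inr))) := by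
    intro y
    have hy : y = Sum.elim (y ∘ Sum.inl) (y ∘ Sum.inr) := by
      funext i; cases i <;> rfl
    rw [hKT]
    conv_lhs => rw [hy]
    rw [Matrix.fromBlocks_mulVec, sumElim_dotProduct_sumElim]
    simp only [Matrix.add_mulVec, Matrix.smul_mulVec, dotProduct_add,
      dotProduct_smul, Matrix.one_mulVec, Matrix.zero_mulVec, smul_eq_mul, add_zero,
      Sum.elim_comp_inl, Sum.elim_comp_inr]
    ring
  have hre := re_inner_mulEC (K * T⁻¹) x
  rw [← ha, ← hb] at hre
  set u1 : Fin m → ℝ := a ∘ Sum.inl with hu1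
  set v1 : Fin n → ℝ := a ∘ Sum.inr with hv1
  set u2 : Fin m → ℝ := b ∘ Sum.inl with hu2
  set v2 : Fin n → ℝ := b ∘ Sum.inr with hv2
  set CR : ℝ := v1 ⬝ᵥ ((R * Aᵀ) *ᵥ u1) + v2 ⬝ᵥ ((R * Aᵀ) *ᵥ u2) with hCR
  set DG : ℝ := v1 ⬝ᵥ (R *ᵥ v1) + v2 ⬝ᵥ (R *ᵥ v2) with hDG
  set NN : ℝ := u1 ⬝ᵥ u1 + v1 ⬝ᵥ v1 + u2 ⬝ᵥ u2 + v2 ⬝ᵥ v2 with hNN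
  have hsplitdot : ∀ y : (Fin m ⊕ Fin n) → ℝ,
      y ⬝ᵥ y = (y ∘ Sum.inl) ⬝ᵥ (y ∘ Sum.inl) + (y ∘ Sum.inr) ⬝ᵥ (y ∘ Sum.inr) := by
    intro y
    have hy : y = Sum.elim (y ∘ Sum.inl) (y ∘ Sum.inr) := by
      funext i; cases i <;> rfl
    conv_lhs => rw [hy]
    rw [sumElim_dotProduct_sumElim]
  have hNum : (⟪mulEC (K * T⁻¹) x, x⟫).re = NN + c * CR + c * DG := by
    rw [hre, hQ a, hQ b, hCR, hDG, hNN]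
    ring
  have hxxC : (⟪x, x⟫ : ℂ) = ((‖x‖ ^ 2 : ℝ) : ℂ) := by
    rw [inner_self_eq_norm_sq_to_K]
    norm_cast
  have hmul1 : mulEC (1 : Matrix (Fin m ⊕ Fin n) (Fin m ⊕ Fin n) ℝ) x = x := by
    have h1m : ((1 : Matrix (Fin m ⊕ Fin n) (Fin m ⊕ Fin n) ℝ).map Complex.ofReal)
        = (1 : Matrix (Fin m ⊕ Fin n) (Fin m ⊕ Fin n) ℂ) :=
      Matrix.map_one _ Complex.ofReal_zero Complex.ofReal_one
    rw [mulEC, h1m, Matrix.toEuclideanLin_apply, Matrix.one_mulVec]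
  have hNX : ‖x‖ ^ 2 = NN := by
    have h1W := re_inner_mulEC (1 : Matrix (Fin m ⊕ Fin n) (Fin m ⊕ Fin n) ℝ) x
    rw [← ha, ← hb, hmul1, hxxC, Matrix.one_mulVec, Matrix.one_mulVec] at h1W
    rw [hsplitdot a, hsplitdot b] at h1W
    simp only [Complex.ofReal_re] at h1W
    rw [h1W, hNN]
    ring
  have hN0 : 0 < NN := by
    rw [← hNX]
    exact pow_pos (norm_pos_iff.mpr hx) 2
  -- eigenvalue positivity
  have hPSD : (Aᵀ * A).PosSemidef := by
    have := Matrix.posSemidef_conjTranspose_mul_self A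
    rwa [Matrix.conjTranspose_eq_transpose_of_trivial] at this
  have hlmin0 : 0 ≤ lmin := by
    rw [hlmin]; exact Real.iInf_nonneg fun i => hPSD.eigenvalues_nonneg i
  have hγl : 0 < γ + lmin := by linarith
  set g : ℝ := Real.sqrt γ with hgdef
  have hg0 : 0 < g := Real.sqrt_pos.mpr hγ0
  have hg2 : g ^ 2 = γ := Real.sq_sqrt hγ0.le
  have q4 : (0:ℝ) < 4 * g := by linarith
  have q2 : (0:ℝ) < 2 * g := by linarith
  -- diag bounds
  have hDG0 : 0 ≤ DG := add_nonneg (hRpos v1) (hRpos v2)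
  have hDGup : (γ + lmin) * DG ≤ NN := by
    have h1 := hRupper v1
    have h2 := hRupper v2
    rw [← hlmin] at h1 h2
    have h3 := dot_self_nonneg u1
    have h4 := dot_self_nonneg u2
    rw [hDG, hNN]
    nlinarith
  -- cross bounds
  have hcr : ∀ (u : Fin m → ℝ) (v : Fin n → ℝ),
      -(v ⬝ᵥ v + u ⬝ᵥ u) ≤ 4 * g * (v ⬝ᵥ ((R * Aᵀ) *ᵥ u)) ∧
      4 * g * (v ⬝ᵥ ((R * Aᵀ) *ᵥ u)) ≤ v ⬝ᵥ v + u ⬝ᵥ u := by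
    intro u v
    have h := hRcross u v
    have hsq : (4 * g * (v ⬝ᵥ ((R * Aᵀ) *ᵥ u))) ^ 2 ≤ (v ⬝ᵥ v + u ⬝ᵥ u) ^ 2 := by
      nlinarith [sq_nonneg (v ⬝ᵥ v - u ⬝ᵥ u), hg2, sq_nonneg (v ⬝ᵥ ((R * Aᵀ) *ᵥ u)), hg0]
    have hs0 : 0 ≤ v ⬝ᵥ v + u ⬝ᵥ u := add_nonneg (dot_self_nonneg v) (dot_self_nonneg u)
    constructor <;>
      nlinarith [hsq, hs0, sq_nonneg (v ⬝ᵥ v + u ⬝ᵥ u + 4 * g * (v ⬝ᵥ ((R * Aᵀ) *ᵥ u))),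
        sq_nonneg (v ⬝ᵥ v + u ⬝ᵥ u - 4 * g * (v ⬝ᵥ ((R * Aᵀ) *ᵥ u)))]
  have hCRlow : -NN ≤ 4 * g * CR := by
    have h1 := (hcr u1 v1).1
    have h2 := (hcr u2 v2).1
    rw [hCR, hNN]
    linarith
  have hCRup : 4 * g * CR ≤ NN := by
    have h1 := (hcr u1 v1).2
    have h2 := (hcr u2 v2).2
    rw [hCR, hNN]
    linarith
  have e3 : η = (-c) / (2 * g) := by
    rw [hη, hc]
    ring_nf
  clear_value NN CR DG g c u1 v1 u2 v2 a b Tinv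
  clear hre hQ hmul1 hKT hTTinv hTinvEq e11 e12 e21 e22 hkeyN hkeyAt hsplit hSR hRpos
    hRupper hRcross hsplitdot hcr hTinvdef hT hK
  -- final assembly
  rw [hxxC, Complex.div_ofReal_re, hNum, hNX, Set.mem_Ioo]
  constructor
  · rw [lt_div_iff₀ hN0]
    have hA : c * NN ≤ c * (4 * g * CR) := mul_le_mul_of_nonpos_left hCRup hcneg.le
    have hB : c * NN ≤ c * ((γ + lmin) * DG) := mul_le_mul_of_nonpos_left hDGup hcneg.le
    have hA' : c * NN / (4 * g) ≤ c * CR := by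
      rw [div_le_iff₀ q4]
      calc c * NN ≤ c * (4 * g * CR) := hA
        _ = c * CR * (4 * g) := by ring
    have hB' : c * NN / (γ + lmin) ≤ c * DG := by
      rw [div_le_iff₀ hγl]
      calc c * NN ≤ c * ((γ + lmin) * DG) := hB
        _ = c * DG * (γ + lmin) := by ring
    have e1 : (μ ^ 2 + lmin) / (γ + lmin) = 1 + c / (γ + lmin) := by
      rw [hc]; field_simp; ring
    have hcNN : c * NN < 0 := mul_neg_of_neg_of_pos hcneg hN0
    have e4 : (-η) * NN < c * NN / (4 * g) := by
      have h24 : c * NN / (2 * g) < c * NN / (4 * g) := by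
        rw [div_lt_div_iff₀ q2 q4]
        linarith [mul_lt_mul_of_neg_left (show 2 * g < 4 * g by linarith) hcNN]
      have : (-η) * NN = c * NN / (2 * g) := by
        rw [e3]; ring
      linarith
    have expand : ((μ ^ 2 + lmin) / (γ + lmin) - η) * NN
        = NN + (c * NN / (γ + lmin)) + (-η) * NN := by
      rw [e1]; ring
    linarith
  · rw [div_lt_iff₀ hN0]
    have hC : c * (4 * g * CR) ≤ c * (-NN) := mul_le_mul_of_nonpos_left hCRlow hcneg.le
    have hC' : c * CR ≤ (-c) * NN / (4 * g) := by
      rw [le_div_iff₀ q4]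
      calc c * CR * (4 * g) = c * (4 * g * CR) := by ring
        _ ≤ c * (-NN) := hC
        _ = (-c) * NN := by ring
    have hD : c * DG ≤ 0 := mul_nonpos_of_nonpos_of_nonneg hcneg.le hDG0
    have hE : (-c) * NN / (4 * g) < (-c) * NN / (2 * g) := by
      rw [div_lt_div_iff₀ q4 q2]
      linarith [mul_lt_mul_of_pos_left (show 2 * g < 4 * g by linarith)
        (mul_pos (neg_pos.mpr hcneg) hN0)]
    have expand : (1 + η) * NN = NN + (-c) * NN / (2 * g) := by
      rw [e3]; ring
    linarith
end

section
/- Let A be a real m×n matrix, μ ≥ 0, and γ > μ². Set K = [I_m, A; −Aᵀ, μ² I_n], T = [I_m, A; −Aᵀ, γ I_n], and η̄ = (γ − μ²)/(2√γ). Then for every nonzero x ∈ ℂ^{m+n}, the imaginary part of ⟨K T⁻¹ x, x⟩ / ⟨x, x⟩ satisfies |Im( ⟨K T⁻¹ x, x⟩ / ⟨x, x⟩ )| < η̄. -/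
open Matrix
open scoped ComplexInnerProductSpace
set_option maxHeartbeats 1000000


lemma key (a b p q ρ I g : ℝ) (hg : 0 < g) (hp : 0 ≤ p) (hq : 0 ≤ q) (hD : 0 < a^2+b^2)
    (h1 : (ρ + (p^2+g^2*q^2))^2 + I^2 ≤ a^2*p^2) (h2 : ρ^2 + I^2 ≤ b^2*q^2) :
    2*g*|I| < a^2+b^2 := by
  rcases eq_or_ne I 0 with hI | hI
  · simpa [hI] using hD
  · have hI2 : 0 < I^2 := by positivity
    set c : ℝ := p^2 + g^2*q^2 with hc
    have hq2 : 0 < q^2 := by nlinarith [sq_nonneg ρ, sq_nonneg b]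
    have hp2 : 0 < p^2 := by nlinarith [sq_nonneg (ρ+c), sq_nonneg a, sq_nonneg (g*q^2)]
    have hq' : 0 < q := lt_of_le_of_ne hq (by rintro rfl; simp at hq2)
    have hp' : 0 < p := lt_of_le_of_ne hp (by rintro rfl; simp at hp2)
    have hJ : 0 < |I| := abs_pos.mpr hI
    have hJ2 : |I|^2 = I^2 := sq_abs I
    set L : ℝ := ((ρ+c)^2+I^2)*q^2 + (ρ^2+I^2)*p^2 with hL
    have s1 : ((ρ+c)^2*q^2 + ρ^2*p^2)*(p^2+q^2) ≥ c^2*p^2*q^2 := by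
      nlinarith [sq_nonneg ((ρ+c)*q^2 + ρ*p^2)]
    have s2 : c^2*p^2*q^2 + I^2*(p^2+q^2)^2 ≥ 2*c*(abs I)*(p*q)*(p^2+q^2) := by
      nlinarith [sq_nonneg (c*(p*q) - (abs I)*(p^2+q^2)), sq_abs I]
    have hcg : c ≥ 2*g*p*q := by nlinarith [sq_nonneg (p - g*q)]
    have s3 : 2*c*(abs I)*(p*q)*(p^2+q^2) ≥ (4*g*(abs I)*(p^2*q^2))*(p^2+q^2) := by
      have h := mul_le_mul_of_nonneg_right hcg
        (by positivity : (0:ℝ) ≤ 2*(abs I)*(p*q)*(p^2+q^2))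
      linarith [h]
    have s5 : L*(p^2+q^2) ≥ (4*g*(abs I)*(p^2*q^2))*(p^2+q^2) := by
      have : L*(p^2+q^2) = ((ρ+c)^2*q^2 + ρ^2*p^2)*(p^2+q^2) + I^2*(p^2+q^2)^2 := by ring
      linarith [s1, s2, s3]
    have hpq2 : (0:ℝ) < p^2+q^2 := by positivity
    have hpq2' : (0:ℝ) < p^2*q^2 := by positivity
    have s5' : L ≥ 4*g*(abs I)*(p^2*q^2) :=
      le_of_mul_le_mul_right (by linarith [s5]) hpq2
    have s4 : (a^2+b^2)*(p^2*q^2) ≥ L := by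
      have h1' := mul_le_mul_of_nonneg_right h1 (le_of_lt hq2)
      have h2' := mul_le_mul_of_nonneg_right h2 (le_of_lt hp2)
      have : (a^2+b^2)*(p^2*q^2) = a^2*p^2*q^2 + b^2*q^2*p^2 := by ring
      rw [this, hL]; linarith
    have s6 : a^2+b^2 ≥ 4*g*(abs I) :=
      le_of_mul_le_mul_right (by linarith [s4, s5']) hpq2'
    nlinarith [s6]


noncomputable def toE {k : ℕ} (h : Fin k → ℂ) : EuclideanSpace ℂ (Fin k) :=
  (WithLp.equiv 2 _).symm h

lemma mulEC_mul {ι : Type} [Fintype ι] [DecidableEq ι] (W₁ W₂ : Matrix ι ι ℝ)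
    (x : EuclideanSpace ℂ ι) : mulEC (W₁ * W₂) x = mulEC W₁ (mulEC W₂ x) := by
  simp [mulEC, Matrix.toEuclideanLin_apply,
    show (W₁ * W₂).map Complex.ofReal = W₁.map Complex.ofReal * W₂.map Complex.ofReal from
      Matrix.map_mul (f := Complex.ofRealHom), Matrix.mulVec_mulVec]

lemma mulEC_one {ι : Type} [Fintype ι] [DecidableEq ι] (x : EuclideanSpace ℂ ι) :
    mulEC 1 x = x := by
  simp [mulEC, Matrix.toEuclideanLin_apply,
    show (1 : Matrix ι ι ℝ).map Complex.ofReal = 1 from Matrix.map_one _ (by simp) (by simp)]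

lemma inner_split {m n : ℕ} (a b : Fin m → ℂ) (c d : Fin n → ℂ) :
    ⟪((WithLp.equiv 2 ((Fin m ⊕ Fin n) → ℂ)).symm (Sum.elim a c)),
     ((WithLp.equiv 2 ((Fin m ⊕ Fin n) → ℂ)).symm (Sum.elim b d))⟫
      = ⟪toE a, toE b⟫ + ⟪toE c, toE d⟫ := by
  simp [toE, PiLp.inner_apply, Fintype.sum_sum_type]

lemma T_isUnit_det {m n : ℕ} (A : Matrix (Fin m) (Fin n) ℝ) (γ : ℝ) (hγ : 0 < γ) :
    IsUnit (Matrix.fromBlocks 1 A (-Aᵀ) (γ • (1 : Matrix (Fin n) (Fin n) ℝ))).det := by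
  set T := Matrix.fromBlocks 1 A (-Aᵀ) (γ • (1 : Matrix (Fin n) (Fin n) ℝ)) with hT
  rw [← Matrix.isUnit_iff_isUnit_det, ← Matrix.mulVec_injective_iff_isUnit]
  have hker : ∀ z, T *ᵥ z = 0 → z = 0 := by
    intro z hz
    set u : Fin m → ℝ := z ∘ Sum.inl
    set v : Fin n → ℝ := z ∘ Sum.inr
    rw [hT, Matrix.fromBlocks_mulVec] at hz
    have h1 : u + A *ᵥ v = 0 := by
      funext i; have := congrFun hz (Sum.inl i); simpa [u] using this
    have h2 : -(Aᵀ *ᵥ u) + γ • v = 0 := by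
      funext j; have := congrFun hz (Sum.inr j)
      simpa [v, Matrix.neg_mulVec, Matrix.smul_mulVec] using this
    have e1 : u ⬝ᵥ u + u ⬝ᵥ (A *ᵥ v) = 0 := by
      have := congrArg (fun w => u ⬝ᵥ w) h1; simpa [dotProduct_add] using this
    have e2 : -((Aᵀ *ᵥ u) ⬝ᵥ v) + γ * (v ⬝ᵥ v) = 0 := by
      have := congrArg (fun w => w ⬝ᵥ v) h2
      simpa [add_dotProduct, neg_dotProduct, smul_dotProduct] using this
    have eadj : u ⬝ᵥ (A *ᵥ v) = (Aᵀ *ᵥ u) ⬝ᵥ v := by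
      rw [Matrix.dotProduct_mulVec, Matrix.mulVec_transpose]
    have hu2 : (0:ℝ) ≤ u ⬝ᵥ u := Finset.sum_nonneg fun i _ => mul_self_nonneg _
    have hv2 : (0:ℝ) ≤ v ⬝ᵥ v := Finset.sum_nonneg fun i _ => mul_self_nonneg _
    have hu0 : u ⬝ᵥ u = 0 := by nlinarith
    have hv0 : v ⬝ᵥ v = 0 := by nlinarith
    rw [dotProduct_self_eq_zero] at hu0 hv0
    funext i
    rcases i with i | j
    · exact congrFun hu0 i
    · exact congrFun hv0 j
  intro z₁ z₂ h
  have : T *ᵥ (z₁ - z₂) = 0 := by rw [Matrix.mulVec_sub, h, sub_self]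
  have := hker _ this
  exact sub_eq_zero.mp this

lemma inner_toE {k : ℕ} (a b : Fin k → ℂ) :
    ⟪toE a, toE b⟫ = dotProduct (star a) b := by
  simp [toE, PiLp.inner_apply, RCLike.inner_apply, dotProduct, mul_comm]

lemma adjC {m n : ℕ} (A : Matrix (Fin m) (Fin n) ℝ) (u : Fin m → ℂ) (v : Fin n → ℂ) :
    ⟪toE u, toE ((A.map Complex.ofReal) *ᵥ v)⟫
      = ⟪toE ((Aᵀ.map Complex.ofReal) *ᵥ u), toE v⟫ := by
  rw [inner_toE, inner_toE, Matrix.star_mulVec, Matrix.dotProduct_mulVec]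
  congr 1
  have : (Aᵀ.map Complex.ofReal)ᴴ = A.map Complex.ofReal := by
    ext i j
    simp [Matrix.conjTranspose_apply, Matrix.map_apply]
  rw [this]

lemma toE_neg {k : ℕ} (h : Fin k → ℂ) : toE (-h) = -toE h := rfl
lemma toE_add {k : ℕ} (h₁ h₂ : Fin k → ℂ) : toE (h₁ + h₂) = toE h₁ + toE h₂ := rfl
lemma toE_sub {k : ℕ} (h₁ h₂ : Fin k → ℂ) : toE (h₁ - h₂) = toE h₁ - toE h₂ := rfl
lemma toE_smul {k : ℕ} (z : ℂ) (h : Fin k → ℂ) : toE (z • h) = z • toE h := rfl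

lemma inner_self_ofReal {E : Type*} [NormedAddCommGroup E] [InnerProductSpace ℂ E] (S : E) :
    ⟪S, S⟫ = ((‖S‖^2 : ℝ) : ℂ) := by
  rw [inner_self_eq_norm_sq_to_K, Complex.ofReal_pow]; norm_cast

/-- Imaginary-part bound on the field of values of `K T⁻¹` with
`K = [I, A; −Aᵀ, μ² I]`, `T = [I, A; −Aᵀ, γ I]`, `γ > μ²` and `η̄ = (γ − μ²)/(2√γ)`:
`|Im(⟨K T⁻¹ x, x⟩/⟨x, x⟩)| < η̄` for every `x ≠ 0`. -/
theorem stmt15 {m n : ℕ} (A : Matrix (Fin m) (Fin n) ℝ) (μ γ : ℝ)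
    (hμ : 0 ≤ μ) (hγ : μ ^ 2 < γ)
    (K T : Matrix (Fin m ⊕ Fin n) (Fin m ⊕ Fin n) ℝ)
    (hK : K = Matrix.fromBlocks 1 A (-Aᵀ) (μ ^ 2 • (1 : Matrix (Fin n) (Fin n) ℝ)))
    (hT : T = Matrix.fromBlocks 1 A (-Aᵀ) (γ • (1 : Matrix (Fin n) (Fin n) ℝ)))
    (η : ℝ) (hη : η = (γ - μ ^ 2) / (2 * Real.sqrt γ))
    (x : EuclideanSpace ℂ (Fin m ⊕ Fin n)) (hx : x ≠ 0) :
    |(⟪mulEC (K * T⁻¹) x, x⟫ / ⟪x, x⟫).im| < η := by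
  have hγ0 : 0 < γ := lt_of_le_of_lt (sq_nonneg μ) hγ
  set g : ℝ := Real.sqrt γ with hgdef
  have hg : 0 < g := Real.sqrt_pos.mpr hγ0
  have hg2 : g^2 = γ := Real.sq_sqrt hγ0.le
  have hdet : IsUnit T.det := by rw [hT]; exact T_isUnit_det A γ hγ0
  set y : EuclideanSpace ℂ (Fin m ⊕ Fin n) := mulEC T⁻¹ x with hy
  have hxy : mulEC T y = x := by
    rw [hy, ← mulEC_mul, Matrix.mul_nonsing_inv _ hdet, mulEC_one]
  have hKT : mulEC (K * T⁻¹) x = mulEC K y := mulEC_mul K T⁻¹ x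
  -- components
  set yf : (Fin m ⊕ Fin n) → ℂ := WithLp.equiv 2 _ y with hyf
  set u : Fin m → ℂ := yf ∘ Sum.inl with hu
  set v : Fin n → ℂ := yf ∘ Sum.inr with hv
  set Ac : Matrix (Fin m) (Fin n) ℂ := A.map Complex.ofReal with hAc
  set s : Fin m → ℂ := u + Ac *ᵥ v with hs
  set r : Fin n → ℂ := Aᵀ.map Complex.ofReal *ᵥ u - (γ:ℂ) • v with hr
  set δ : ℂ := ((γ - μ^2 : ℝ) : ℂ) with hδ
  -- matrix maps
  have hTc : T.map Complex.ofReal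
      = Matrix.fromBlocks 1 Ac (-(Aᵀ.map Complex.ofReal)) ((γ:ℂ) • 1) := by
    rw [hT]
    ext (i|i) (j|j) <;>
      simp [hAc, Matrix.map_apply, Matrix.one_apply, Matrix.smul_apply, apply_ite Complex.ofReal]
  have hKc : K.map Complex.ofReal
      = Matrix.fromBlocks 1 Ac (-(Aᵀ.map Complex.ofReal)) (((μ^2:ℝ):ℂ) • 1) := by
    rw [hK]
    ext (i|i) (j|j) <;>
      simp [hAc, Matrix.map_apply, Matrix.one_apply, Matrix.smul_apply, apply_ite Complex.ofReal]
  -- block description of x and K y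
  have hxe : x = (WithLp.equiv 2 ((Fin m ⊕ Fin n) → ℂ)).symm (Sum.elim s (-r)) := by
    rw [← hxy]
    show Matrix.toEuclideanLin (T.map Complex.ofReal) y = _
    rw [Matrix.toEuclideanLin_apply, hTc, Matrix.fromBlocks_mulVec]
    congr 1
    funext ij
    rcases ij with i | j
    · simp [hs, hu, hv, hyf]
    · simp [hr, hu, hv, hyf, Matrix.neg_mulVec, Matrix.smul_mulVec]
      ring
  have hwe : mulEC K y
      = (WithLp.equiv 2 ((Fin m ⊕ Fin n) → ℂ)).symm (Sum.elim s (-(r + δ • v))) := by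
    show Matrix.toEuclideanLin (K.map Complex.ofReal) y = _
    rw [Matrix.toEuclideanLin_apply, hKc, Matrix.fromBlocks_mulVec]
    congr 1
    funext ij
    rcases ij with i | j
    · simp [hs, hu, hv, hyf]
    · simp [hr, hδ, hu, hv, hyf, Matrix.neg_mulVec, Matrix.smul_mulVec, Complex.ofReal_sub,
        Complex.ofReal_pow]
      ring
  -- inner product computations
  set S : EuclideanSpace ℂ (Fin m) := toE s with hS
  set R : EuclideanSpace ℂ (Fin n) := toE r with hR
  set V : EuclideanSpace ℂ (Fin n) := toE v with hV
  set AV : EuclideanSpace ℂ (Fin m) := toE (Ac *ᵥ v) with hAV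
  set U : EuclideanSpace ℂ (Fin m) := toE u with hU
  set Dr : ℝ := ‖S‖^2 + ‖R‖^2 with hDr
  have hxx : ⟪x, x⟫ = ((Dr : ℝ) : ℂ) := by
    rw [hxe, inner_split, toE_neg, inner_neg_neg, inner_self_ofReal, inner_self_ofReal]
    rw [hDr]; push_cast; ring
  have hwx : ⟪mulEC K y, x⟫ = ((Dr : ℝ) : ℂ) + δ * ⟪V, R⟫ := by
    have hte : toE (r + δ • v) = R + δ • V := by rw [toE_add, toE_smul, hR, hV]
    rw [hwe, hxe, inner_split, toE_neg, toE_neg, inner_neg_neg, hte, ← hS, ← hR]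
    rw [inner_add_left, inner_smul_left, Complex.conj_ofReal, inner_self_ofReal,
      inner_self_ofReal]
    rw [hDr, hδ]; push_cast; ring
  have hxnorm : Dr = ‖x‖^2 := by
    have := hxx.symm.trans (inner_self_ofReal x)
    exact_mod_cast this
  have hDpos : 0 < Dr := by
    rw [hxnorm]
    have : 0 < ‖x‖ := norm_pos_iff.mpr hx
    positivity
  -- the adjoint identity
  have hSadd : S = U + AV := by rw [hS, hU, hAV, hs, toE_add]
  have hRsub : R = toE (Aᵀ.map Complex.ofReal *ᵥ u) - (γ:ℂ) • V := by
    rw [hR, hV, hr, toE_sub, toE_smul]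
  have hZid : ⟪S, AV⟫ = ⟪R, V⟫ + ((‖AV‖^2 + γ*‖V‖^2 : ℝ) : ℂ) := by
    have e1 : ⟪S, AV⟫ = ⟪U, AV⟫ + ((‖AV‖^2 : ℝ) : ℂ) := by
      rw [hSadd, inner_add_left, inner_self_ofReal]
    have e2 : ⟪R, V⟫ = ⟪U, AV⟫ - (γ:ℂ) * ((‖V‖^2 : ℝ) : ℂ) := by
      rw [hRsub, inner_sub_left, inner_smul_left, Complex.conj_ofReal, inner_self_ofReal]
      congr 1
      rw [hU, hAV, hAc]
      exact (adjC A u v).symm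
    rw [e1, e2]; push_cast; ring
  -- Cauchy–Schwarz bounds
  have habs : ∀ (z : ℂ), ‖z‖^2 = z.re^2 + z.im^2 := by
    intro z
    rw [Complex.sq_norm, Complex.normSq_apply]; ring
  have hcs2 : (⟪R,V⟫.re)^2 + (⟪R,V⟫.im)^2 ≤ ‖R‖^2 * ‖V‖^2 := by
    have h := norm_inner_le_norm (𝕜 := ℂ) R V
    have h2 := pow_le_pow_left₀ (norm_nonneg _) h 2
    rw [habs] at h2
    calc (⟪R,V⟫.re)^2 + (⟪R,V⟫.im)^2 ≤ (‖R‖*‖V‖)^2 := h2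
    _ = ‖R‖^2*‖V‖^2 := by ring
  have hre1 : ⟪S, AV⟫.re = ⟪R,V⟫.re + (‖AV‖^2 + γ*‖V‖^2) := by
    rw [hZid, Complex.add_re, Complex.ofReal_re]
  have him1 : ⟪S, AV⟫.im = ⟪R,V⟫.im := by
    rw [hZid, Complex.add_im, Complex.ofReal_im, add_zero]
  have hcs1 : (⟪R,V⟫.re + (‖AV‖^2 + γ*‖V‖^2))^2 + (⟪R,V⟫.im)^2 ≤ ‖S‖^2 * ‖AV‖^2 := by
    have h := norm_inner_le_norm (𝕜 := ℂ) S AV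
    have h2 := pow_le_pow_left₀ (norm_nonneg _) h 2
    rw [habs] at h2
    rw [hre1, him1] at h2
    calc _ ≤ (‖S‖*‖AV‖)^2 := h2
    _ = ‖S‖^2*‖AV‖^2 := by ring
  have hcs1' : (⟪R,V⟫.re + (‖AV‖^2 + g^2*‖V‖^2))^2 + (⟪R,V⟫.im)^2 ≤ ‖S‖^2 * ‖AV‖^2 := by
    rw [hg2]; exact hcs1
  have hkey := key ‖S‖ ‖R‖ ‖AV‖ ‖V‖ ⟪R,V⟫.re ⟪R,V⟫.im g hg (norm_nonneg _)
    (norm_nonneg _) (by rw [← hDr]; exact hDpos) hcs1' hcs2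
  -- finish
  have hδr : 0 < γ - μ^2 := by linarith
  have hVR : ⟪V, R⟫ = (starRingEnd ℂ) ⟪R, V⟫ := (inner_conj_symm V R).symm
  rw [hKT, hwx, hxx, hVR]
  have him : ((((Dr : ℝ) : ℂ) + δ * (starRingEnd ℂ) ⟪R, V⟫) / ((Dr : ℝ) : ℂ)).im
      = ((γ - μ^2) * (-(⟪R,V⟫.im))) / Dr := by
    rw [Complex.div_ofReal_im]
    congr 1
    rw [Complex.add_im, Complex.ofReal_im, zero_add, hδ]
    simp only [Complex.mul_im, Complex.ofReal_re, Complex.ofReal_im, Complex.conj_im,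
      Complex.conj_re]
    ring
  rw [him, hη]
  rw [abs_div, abs_mul, abs_neg, abs_of_pos hδr, abs_of_pos hDpos]
  rw [div_lt_div_iff₀ hDpos (by positivity)]
  have hDrle : 2*g*|⟪R,V⟫.im| < Dr := by rw [hDr]; exact hkey
  nlinarith [hDrle, hδr, abs_nonneg (⟪R,V⟫.im)]
end

section
/- Let μ > 0. Then the equation √γ (γ − μ²) = 2μ² has a unique solution γ* in (0, ∞), and γ* > μ². Moreover, for every γ with μ² < γ < γ* and every real λ ≥ 0, the inequalities 0 < γ − μ² < 2√γ (μ² + λ)/(γ + λ) hold; in particular the interval (μ², γ*) of admissible values of γ is independent of λ. -/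
/-- The function `γ ↦ √γ (γ - μ²)` is strictly monotone on `[μ², ∞)`. -/
lemma stmt17_mono (μ : ℝ) : StrictMonoOn (fun γ : ℝ => Real.sqrt γ * (γ - μ ^ 2))
    (Set.Ici (μ ^ 2)) := by
  intro a ha b hb hab
  simp only [Set.mem_Ici] at ha hb
  have ha0 : 0 ≤ a := le_trans (sq_nonneg μ) ha
  have hsa : Real.sqrt a ≤ Real.sqrt b := Real.sqrt_le_sqrt hab.le
  have hsb : 0 < Real.sqrt b := Real.sqrt_pos.mpr (lt_of_le_of_lt (le_trans (sq_nonneg μ) ha) hab)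
  calc Real.sqrt a * (a - μ ^ 2) ≤ Real.sqrt b * (a - μ ^ 2) := by
        apply mul_le_mul_of_nonneg_right hsa (by linarith)
    _ < Real.sqrt b * (b - μ ^ 2) := by
        apply mul_lt_mul_of_pos_left (by linarith) hsb

/-- For `μ > 0`, the equation `√γ (γ − μ²) = 2μ²` has a unique positive solution `γ*`,
which satisfies `γ* > μ²`; and for every `γ ∈ (μ², γ*)` and every `λ ≥ 0` one has
`0 < γ − μ² < 2√γ (μ² + λ)/(γ + λ)`. -/
theorem stmt17 (μ : ℝ) (hμ : 0 < μ) :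
    ∃ γs : ℝ, 0 < γs ∧ Real.sqrt γs * (γs - μ ^ 2) = 2 * μ ^ 2 ∧
      (∀ γ' : ℝ, 0 < γ' → Real.sqrt γ' * (γ' - μ ^ 2) = 2 * μ ^ 2 → γ' = γs) ∧
      μ ^ 2 < γs ∧
      ∀ γ : ℝ, μ ^ 2 < γ → γ < γs → ∀ l : ℝ, 0 ≤ l →
        0 < γ - μ ^ 2 ∧ γ - μ ^ 2 < 2 * Real.sqrt γ * (μ ^ 2 + l) / (γ + l) := by
  set f : ℝ → ℝ := fun γ => Real.sqrt γ * (γ - μ ^ 2) with hf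
  have hcont : ContinuousOn f (Set.Icc (μ ^ 2) (μ ^ 2 + 2 * μ)) :=
    (Real.continuous_sqrt.mul (continuous_id.sub continuous_const)).continuousOn
  have hle : μ ^ 2 ≤ μ ^ 2 + 2 * μ := by nlinarith
  have hfb : 2 * μ ^ 2 ≤ f (μ ^ 2 + 2 * μ) := by
    have h1 : μ ≤ Real.sqrt (μ ^ 2 + 2 * μ) := by
      have := Real.sqrt_le_sqrt (show μ ^ 2 ≤ μ ^ 2 + 2 * μ by nlinarith)
      rwa [Real.sqrt_sq hμ.le] at this
    have : μ * (2 * μ) ≤ Real.sqrt (μ ^ 2 + 2 * μ) * (2 * μ) :=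
      mul_le_mul_of_nonneg_right h1 (by positivity)
    simp only [hf]
    nlinarith
  have hfa : f (μ ^ 2) = 0 := by simp [hf]
  obtain ⟨γs, hγsmem, hγs⟩ := intermediate_value_Icc hle hcont
    (Set.mem_Icc.mpr ⟨by rw [hfa]; positivity, hfb⟩)
  have hmono := stmt17_mono μ
  have hγs1 : μ ^ 2 ≤ γs := hγsmem.1
  have hγsgt : μ ^ 2 < γs := by
    rcases eq_or_lt_of_le hγs1 with h | h
    · exfalso; rw [← h, hfa] at hγs; nlinarith
    · exact h
  have hγspos : 0 < γs := lt_of_le_of_lt (sq_nonneg μ) hγsgt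
  refine ⟨γs, hγspos, hγs, ?_, hγsgt, ?_⟩
  · intro γ' hγ'pos hγ'eq
    have hγ'ge : μ ^ 2 ≤ γ' := by
      by_contra h
      push_neg at h
      have : Real.sqrt γ' * (γ' - μ ^ 2) ≤ 0 :=
        mul_nonpos_of_nonneg_of_nonpos (Real.sqrt_nonneg _) (by linarith)
      nlinarith
    rcases lt_trichotomy γ' γs with h | h | h
    · have := hmono (Set.mem_Ici.mpr hγ'ge) (Set.mem_Ici.mpr hγs1) h
      simp only [hf] at this hγs
      exfalso; rw [hγ'eq, hγs] at this; exact lt_irrefl _ this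
    · exact h
    · have := hmono (Set.mem_Ici.mpr hγs1) (Set.mem_Ici.mpr hγ'ge) h
      simp only [hf] at this hγs
      exfalso; rw [hγ'eq, hγs] at this; exact lt_irrefl _ this
  · intro γ hγlo hγhi l hl
    refine ⟨by linarith, ?_⟩
    have hγpos : 0 < γ := lt_of_le_of_lt (sq_nonneg μ) hγlo
    have hsγ : 0 < Real.sqrt γ := Real.sqrt_pos.mpr hγpos
    have hsq : Real.sqrt γ * Real.sqrt γ = γ := Real.mul_self_sqrt hγpos.le
    have hlt : Real.sqrt γ * (γ - μ ^ 2) < 2 * μ ^ 2 := by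
      have := hmono (Set.mem_Ici.mpr hγlo.le) (Set.mem_Ici.mpr hγs1) hγhi
      simp only [hf] at this hγs
      rw [hγs] at this; exact this
    rw [lt_div_iff₀ (by linarith : (0:ℝ) < γ + l)]
    nlinarith [mul_le_mul_of_nonneg_right hγlo.le hl]
end
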